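/- arXiv:2604.13779 — 2 statements merged into one kernel-verified Lean document; each statement's English description precedes it below -/
import Mathlib

section
/- For the INMA(q1,q2) random field under the independence model, i.e., when additionally the components Z_{s,t;r}^{(i,j)}, 0 ≤ i ≤ q1, 0 ≤ j ≤ q2, within each vector Z_{s,t;r} are mutually independent, the autocovariance function satisfies, for every lag (k,l) ≠ (0,0) with 0 ≤ k ≤ q1 and 0 ≤ l ≤ q2, γ(k,l) := Cov(X_{s,t}, X_{s−k,t−l}) = σ_ε² · ∑_{i=k}^{q1} ∑_{j=l}^{q2} β_{i,j} β_{i−k,j−l}. (Example: independence model.) -/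
open MeasureTheory ProbabilityTheory Finset

open scoped ENNReal NNReal

lemma inma_tsum_chi (n : ℕ) : ∑' r : ℕ, (if r < n then (1:ℝ≥0∞) else 0) = n := by
  rw [tsum_eq_sum (s := Finset.range n) (fun r hr => by
    simp only [Finset.mem_range] at hr; simp [hr])]
  rw [Finset.sum_congr rfl (fun r hr => if_pos (Finset.mem_range.1 hr))]
  simp

lemma inma_cast_sum (n : ℕ) (z : ℕ → ℕ) :
    (∑ r ∈ Finset.range n, ((z r : ℕ) : ℝ≥0∞))
      = ∑' r : ℕ, (if r < n then (1:ℝ≥0∞) else 0) * z r := by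
  rw [tsum_eq_sum (s := Finset.range n) (fun r hr => by
    simp only [Finset.mem_range] at hr; simp [hr])]
  exact Finset.sum_congr rfl fun r hr => by rw [if_pos (Finset.mem_range.1 hr), one_mul]

lemma inma_meas_nat_comp {Ω : Type*} [MeasurableSpace Ω] {h : ℕ → Ω → ℕ}
    (hh : ∀ n, Measurable (h n)) {N : Ω → ℕ} (hN : Measurable N) :
    Measurable fun ω => h (N ω) ω := by
  apply measurable_to_countable'
  intro m
  have : (fun ω => h (N ω) ω) ⁻¹' {m} = ⋃ n, (N ⁻¹' {n} ∩ (h n) ⁻¹' {m}) := by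
    ext ω
    simp only [Set.mem_preimage, Set.mem_singleton_iff, Set.mem_iUnion, Set.mem_inter_iff]
    exact ⟨fun h' => ⟨N ω, rfl, h'⟩, fun ⟨n, hn, h'⟩ => by rw [hn]; exact h'⟩
  rw [this]
  exact MeasurableSet.iUnion fun n =>
    (hN (measurableSet_singleton n)).inter (hh n (measurableSet_singleton m))

lemma inma_lintegral_nat01 {Ω : Type*} [MeasurableSpace Ω] (P : Measure Ω) {f : Ω → ℕ}
    (hf : Measurable f) (h01 : ∀ ω, f ω ≤ 1) :
    ∫⁻ ω, (f ω : ℝ≥0∞) ∂P = P {ω | f ω = 1} := by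
  have h : ∀ ω, (f ω : ℝ≥0∞) = Set.indicator {ω | f ω = 1} (fun _ => 1) ω := by
    intro ω
    rcases Nat.le_one_iff_eq_zero_or_eq_one.1 (h01 ω) with h | h <;>
      simp [Set.indicator, h]
  simp_rw [h]
  exact lintegral_indicator_one (hf (measurableSet_singleton 1))

lemma inma_trunc (m c : ℕ) (hc : c ≤ m) (f : ℕ → ℝ) :
    ∑ x ∈ range (m+1), (if c + x ≤ m then f x else 0) = ∑ x ∈ range (m - c + 1), f x := by
  rw [← Finset.sum_subset (Finset.range_subset_range.2 (by omega) : range (m-c+1) ⊆ range (m+1))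
    (fun x _ hx => by rw [if_neg]; simp only [mem_range] at hx; omega)]
  exact Finset.sum_congr rfl fun x hx => if_pos (by simp only [mem_range] at hx; omega)

lemma inma_Icc_reindex (m c : ℕ) (hc : c ≤ m) (f : ℕ → ℝ) :
    ∑ i ∈ Icc c m, f i = ∑ x ∈ range (m - c + 1), f (c + x) := by
  have himg : Icc c m = Finset.image (fun x => c + x) (range (m - c + 1)) := by
    ext i
    simp only [mem_Icc, mem_image, mem_range]
    constructor
    · rintro ⟨h1, h2⟩; exact ⟨i - c, by omega, by omega⟩
    · rintro ⟨x, hx, rfl⟩; omega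
  rw [himg, Finset.sum_image (fun x _ y _ h => by omega)]

lemma inma_final_alg (q1 q2 k l : ℕ) (hk : k ≤ q1) (hl : l ≤ q2)
    (β : ℕ → ℕ → ℝ) (tB a σ : ℝ) (hσ : σ = tB - a * a) :
    (∑ i ∈ range (q1+1), ∑ j ∈ range (q2+1), ∑ i' ∈ range (q1+1), ∑ j' ∈ range (q2+1),
        (if i = k + i' ∧ j = l + j' then tB else a * a) * (β i j * β i' j'))
      - (∑ i ∈ range (q1+1), ∑ j ∈ range (q2+1), a * β i j)
        * (∑ i ∈ range (q1+1), ∑ j ∈ range (q2+1), a * β i j)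
    = σ * ∑ i ∈ Icc k q1, ∑ j ∈ Icc l q2, β i j * β (i-k) (j-l) := by
  have expand : (∑ i ∈ range (q1+1), ∑ j ∈ range (q2+1), a * β i j)
        * (∑ i ∈ range (q1+1), ∑ j ∈ range (q2+1), a * β i j)
      = ∑ i ∈ range (q1+1), ∑ j ∈ range (q2+1), ∑ i' ∈ range (q1+1), ∑ j' ∈ range (q2+1),
          (a * a) * (β i j * β i' j') := by
    simp only [Finset.sum_mul_sum]
    refine Finset.sum_congr rfl fun i _ => ?_
    rw [Finset.sum_comm]
    exact Finset.sum_congr rfl fun j _ => Finset.sum_congr rfl fun i' _ =>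
      Finset.sum_congr rfl fun j' _ => by ring
  rw [expand]
  simp only [← Finset.sum_sub_distrib]
  have hterm : ∀ i j i' j', (if i = k + i' ∧ j = l + j' then tB else a * a) * (β i j * β i' j')
      - (a * a) * (β i j * β i' j')
      = if (i, j) = (k + i', l + j') then σ * (β i j * β i' j') else 0 := by
    intro i j i' j'
    simp only [Prod.mk.injEq]
    split_ifs with h
    · rw [hσ]; ring
    · ring
  simp only [hterm]
  have hps : ∀ (F : ℕ → ℕ → ℕ → ℕ → ℝ),
      (∑ i ∈ range (q1+1), ∑ j ∈ range (q2+1), ∑ i' ∈ range (q1+1), ∑ j' ∈ range (q2+1),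
        F i j i' j')
      = ∑ p ∈ range (q1+1) ×ˢ range (q2+1), ∑ p' ∈ range (q1+1) ×ˢ range (q2+1),
          F p.1 p.2 p'.1 p'.2 := by
    intro F
    rw [Finset.sum_product]
    exact Finset.sum_congr rfl fun i _ => Finset.sum_congr rfl fun j _ =>
      (Finset.sum_product _ _ (fun p' => F (i, j).1 (i, j).2 p'.1 p'.2)).symm
  rw [hps, Finset.sum_comm]
  have hinner : ∀ p' ∈ range (q1+1) ×ˢ range (q2+1),
      (∑ p ∈ range (q1+1) ×ˢ range (q2+1),
        if p = (k + p'.1, l + p'.2) then σ * (β p.1 p.2 * β p'.1 p'.2) else 0)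
      = if k + p'.1 ≤ q1 ∧ l + p'.2 ≤ q2
          then σ * (β (k + p'.1) (l + p'.2) * β p'.1 p'.2) else 0 := by
    intro p' _
    rw [Finset.sum_ite_eq' (range (q1+1) ×ˢ range (q2+1)) ((k + p'.1, l + p'.2))
      (fun p => σ * (β p.1 p.2 * β p'.1 p'.2))]
    congr 1
    simp only [Finset.mem_product, Finset.mem_range, eq_iff_iff]
    omega
  rw [Finset.sum_congr rfl hinner, Finset.sum_product]
  have h0 : ∀ i' ∈ range (q1+1),
      (∑ j' ∈ range (q2+1), if k + i' ≤ q1 ∧ l + j' ≤ q2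
          then σ * (β (k + i') (l + j') * β i' j') else 0)
      = if k + i' ≤ q1
          then ∑ j' ∈ range (q2 - l + 1), σ * (β (k + i') (l + j') * β i' j')
          else 0 := by
    intro i' _
    by_cases h : k + i' ≤ q1
    · rw [if_pos h, ← inma_trunc q2 l hl (fun j' => σ * (β (k + i') (l + j') * β i' j'))]
      exact Finset.sum_congr rfl fun j' _ => by by_cases h2 : l + j' ≤ q2 <;> simp [h, h2]
    · rw [if_neg h]
      exact Finset.sum_eq_zero fun j' _ => by simp [h]
  rw [Finset.sum_congr rfl h0, inma_trunc q1 k hk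
    (fun i' => ∑ j' ∈ range (q2 - l + 1), σ * (β (k + i') (l + j') * β i' j'))]
  rw [Finset.mul_sum, inma_Icc_reindex q1 k hk]
  refine Finset.sum_congr rfl fun i' _ => ?_
  rw [Finset.mul_sum, inma_Icc_reindex q2 l hl]
  refine Finset.sum_congr rfl fun j' _ => ?_
  simp only [Nat.add_sub_cancel_left]

/-- Independence model: the ACvF equals `σ_ε² ∑∑ β_{ij} β_{i-k,j-l}` for (k,l) ≠ (0,0). -/
theorem inma_independence_model_acvf
    {Ω : Type*} [MeasurableSpace Ω] (P : Measure Ω) [IsProbabilityMeasure P]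
    (q1 q2 : ℕ) (hq : 1 ≤ q1 + q2)
    (β : ℕ → ℕ → ℝ)
    (hβ : ∀ i ≤ q1, ∀ j ≤ q2, β i j ∈ Set.Icc (0 : ℝ) 1)
    -- the i.i.d. innovations, with finite mean and variance
    (ε : ℤ × ℤ → Ω → ℕ) (hεmeas : ∀ p, Measurable (ε p))
    (hεiid : iIndepFun ε P)
    (hεid : ∀ p, Measure.map (ε p) P = Measure.map (ε (0, 0)) P)
    (hεL2 : Integrable (fun ω => ((ε (0, 0) ω : ℝ)) ^ 2) P)
    (με : ℝ) (hμε : με = ∫ ω, (ε (0, 0) ω : ℝ) ∂P)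
    (σε2 : ℝ) (hσε2 : σε2 = variance (fun ω => (ε (0, 0) ω : ℝ)) P)
    -- the counting-series vectors, i.i.d., with {0,1}-valued components
    (Z : ℤ × ℤ → ℕ → Ω → ℕ × ℕ → ℕ)
    (hZmeas : ∀ p r, Measurable (Z p r))
    (hZ01 : ∀ p r ω ij, Z p r ω ij ≤ 1)
    (hZiid : iIndepFun
      (fun pr : (ℤ × ℤ) × ℕ => Z pr.1 pr.2) P)
    (hZid : ∀ p r, Measure.map (Z p r) P = Measure.map (Z (0, 0) 0) P)
    (hZβ : ∀ p r, ∀ i ≤ q1, ∀ j ≤ q2,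
      P {ω | Z p r ω (i, j) = 1} = ENNReal.ofReal (β i j))
    -- the whole thinning family is independent of the innovation family
    (hindep : IndepFun (fun ω p => ε p ω)
      (fun ω (pr : (ℤ × ℤ) × ℕ) => Z pr.1 pr.2 ω) P)
    -- the INMA(q1,q2) random field
    (X : ℤ → ℤ → Ω → ℕ)
    (hX : ∀ s t ω, X s t ω =
      ∑ i ∈ range (q1 + 1), ∑ j ∈ range (q2 + 1),
        ∑ r ∈ range (ε (s - (i : ℤ), t - (j : ℤ)) ω),
          Z (s - (i : ℤ), t - (j : ℤ)) r ω (i, j))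
    -- independence model: the components within each vector Z_{s,t;r} are mutually independent
    (hZcomp : ∀ p r, iIndepFun
      (fun ij : ℕ × ℕ => fun ω => Z p r ω ij) P)
    (s t : ℤ) (k l : ℕ) (hk : k ≤ q1) (hl : l ≤ q2) (hkl : (k, l) ≠ (0, 0)) :
    (∫ ω, (X s t ω : ℝ) * (X (s - (k : ℤ)) (t - (l : ℤ)) ω : ℝ) ∂P)
      - (∫ ω, (X s t ω : ℝ) ∂P) * (∫ ω, (X (s - (k : ℤ)) (t - (l : ℤ)) ω : ℝ) ∂P) =
      σε2 * ∑ i ∈ Icc k q1, ∑ j ∈ Icc l q2, β i j * β (i - k) (j - l) := by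
  classical
  -- basic measurability
  have hεE : ∀ p, Measurable (fun ω => (ε p ω : ℝ≥0∞)) :=
    fun p => measurable_from_top.comp (hεmeas p)
  have hgmeas : ∀ (p : ℤ × ℤ) (r : ℕ),
      Measurable (fun ω => if r < ε p ω then (1:ℝ≥0∞) else 0) :=
    fun p r => (measurable_from_top (f := fun n : ℕ => if r < n then (1:ℝ≥0∞) else 0)).comp
      (hεmeas p)
  have hζmeas : ∀ (p : ℤ × ℤ) (r : ℕ) (c : ℕ × ℕ),
      Measurable (fun ω => (Z p r ω c : ℝ≥0∞)) :=
    fun p r c => measurable_from_top.comp ((measurable_pi_apply c).comp (hZmeas p r))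
  -- the split lemma: a function of the ε-family times a function of the Z-family
  have hsplit : ∀ (u' v' : Ω → ℝ≥0∞) (u : ((ℤ × ℤ) → ℕ) → ℝ≥0∞)
      (v : (((ℤ × ℤ) × ℕ) → ℕ × ℕ → ℕ) → ℝ≥0∞), Measurable u → Measurable v →
      (∀ ω, u' ω = u (fun p => ε p ω)) → (∀ ω, v' ω = v (fun pr => Z pr.1 pr.2 ω)) →
      ∫⁻ ω, u' ω * v' ω ∂P = (∫⁻ ω, u' ω ∂P) * ∫⁻ ω, v' ω ∂P := by
    intro u' v' u v hu hv hu' hv'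
    have h1 : u' = fun ω => u (fun p => ε p ω) := funext hu'
    have h2 : v' = fun ω => v (fun pr => Z pr.1 pr.2 ω) := funext hv'
    subst h1 h2
    exact lintegral_mul_eq_lintegral_mul_lintegral_of_indepFun''
      ((hu.comp (measurable_pi_lambda _ fun p => hεmeas p)).aemeasurable)
      ((hv.comp (measurable_pi_lambda _ fun pr => hZmeas pr.1 pr.2)).aemeasurable)
      (hindep.comp hu hv)
  -- expectation of a single Z component
  have hζint : ∀ (p : ℤ × ℤ) (r : ℕ) (c : ℕ × ℕ), c.1 ≤ q1 → c.2 ≤ q2 →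
      ∫⁻ ω, (Z p r ω c : ℝ≥0∞) ∂P = ENNReal.ofReal (β c.1 c.2) := by
    rintro p r ⟨i, j⟩ h1 h2
    rw [inma_lintegral_nat01 P (f := fun ω => Z p r ω (i, j))
      ((measurable_pi_apply _).comp (hZmeas p r)) (fun ω => hZ01 p r ω _)]
    exact hZβ p r i h1 j h2
  -- expectation of a product of two distinct Z components
  have hζζ : ∀ (p p' : ℤ × ℤ) (r r' : ℕ) (c c' : ℕ × ℕ),
      ((p, r) ≠ (p', r') ∨ c ≠ c') → c.1 ≤ q1 → c.2 ≤ q2 → c'.1 ≤ q1 → c'.2 ≤ q2 →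
      ∫⁻ ω, (Z p r ω c : ℝ≥0∞) * (Z p' r' ω c' : ℝ≥0∞) ∂P
        = ENNReal.ofReal (β c.1 c.2) * ENNReal.ofReal (β c'.1 c'.2) := by
    intro p p' r r' c c' hd h1 h2 h1' h2'
    have hind : IndepFun (fun ω => (Z p r ω c : ℝ≥0∞)) (fun ω => (Z p' r' ω c' : ℝ≥0∞)) P := by
      rcases eq_or_ne (p, r) (p', r') with heq | hne
      · have hp : p = p' := congrArg Prod.fst heq
        have hr : r = r' := congrArg Prod.snd heq
        subst hp; subst hr
        have hc : c ≠ c' := hd.resolve_left (fun h => h rfl)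
        exact ((hZcomp p r).indepFun hc).comp measurable_from_top measurable_from_top
      · exact (hZiid.indepFun hne).comp
          (measurable_from_top.comp (measurable_pi_apply c))
          (measurable_from_top.comp (measurable_pi_apply c'))
    rw [lintegral_mul_eq_lintegral_mul_lintegral_of_indepFun''
      (hζmeas p r c).aemeasurable (hζmeas p' r' c').aemeasurable hind,
      hζint p r c h1 h2, hζint p' r' c' h1' h2']
  -- identical distribution transfer
  have hmap : ∀ (φ : ℕ → ℝ≥0∞) (p : ℤ × ℤ),
      ∫⁻ ω, φ (ε p ω) ∂P = ∫⁻ ω, φ (ε (0, 0) ω) ∂P := by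
    intro φ p
    rw [← lintegral_map (f := φ) measurable_from_top (hεmeas p), hεid p,
      lintegral_map measurable_from_top (hεmeas (0, 0))]
  -- first and second moments of the innovations
  set A : ℝ≥0∞ := ∫⁻ ω, (ε (0, 0) ω : ℝ≥0∞) ∂P with hA
  set B : ℝ≥0∞ := ∫⁻ ω, (ε (0, 0) ω : ℝ≥0∞) ^ 2 ∂P with hB
  have hεfirst : ∀ p : ℤ × ℤ, ∫⁻ ω, (ε p ω : ℝ≥0∞) ∂P = A := fun p => hmap (fun n => (n : ℝ≥0∞)) p
  have hE : ∀ p p' : ℤ × ℤ, ∫⁻ ω, (ε p ω : ℝ≥0∞) * (ε p' ω : ℝ≥0∞) ∂P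
      = if p = p' then B else A * A := by
    intro p p'
    split_ifs with h
    · subst h
      have hpt : ∀ ω, (ε p ω : ℝ≥0∞) * (ε p ω : ℝ≥0∞)
          = (fun n : ℕ => ((n : ℝ≥0∞)) ^ 2) (ε p ω) := fun ω => (sq _).symm
      rw [lintegral_congr hpt, hmap (fun n : ℕ => ((n : ℝ≥0∞)) ^ 2) p]
    · rw [lintegral_mul_eq_lintegral_mul_lintegral_of_indepFun''
        (hεE p).aemeasurable (hεE p').aemeasurable
        ((hεiid.indepFun h).comp measurable_from_top measurable_from_top),
        hεfirst p, hεfirst p']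
  -- expectation of a single thinned term
  have hY1 : ∀ (p : ℤ × ℤ) (c : ℕ × ℕ), c.1 ≤ q1 → c.2 ≤ q2 →
      ∫⁻ ω, (∑ r ∈ range (ε p ω), (Z p r ω c : ℝ≥0∞)) ∂P
        = A * ENNReal.ofReal (β c.1 c.2) := by
    intro p c h1 h2
    have hpt : ∀ ω, (∑ r ∈ range (ε p ω), (Z p r ω c : ℝ≥0∞))
        = ∑' r : ℕ, (if r < ε p ω then (1:ℝ≥0∞) else 0) * (Z p r ω c : ℝ≥0∞) := by
      intro ω
      exact inma_cast_sum (ε p ω) (fun r => Z p r ω c)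
    rw [lintegral_congr hpt, lintegral_tsum
      (fun r => ((hgmeas p r).fun_mul (hζmeas p r c)).aemeasurable)]
    have hterm : ∀ r : ℕ, ∫⁻ ω, (if r < ε p ω then (1:ℝ≥0∞) else 0) * (Z p r ω c : ℝ≥0∞) ∂P
        = (∫⁻ ω, (if r < ε p ω then (1:ℝ≥0∞) else 0) ∂P) * ENNReal.ofReal (β c.1 c.2) := by
      intro r
      rw [hsplit (fun ω => if r < ε p ω then (1:ℝ≥0∞) else 0) (fun ω => (Z p r ω c : ℝ≥0∞))
        (fun x => if r < x p then (1:ℝ≥0∞) else 0) (fun x => ((x (p, r) c : ℕ) : ℝ≥0∞))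
        ((measurable_from_top (f := fun n : ℕ => if r < n then (1:ℝ≥0∞) else 0)).comp
          (measurable_pi_apply p))
        (measurable_from_top.comp ((measurable_pi_apply c).comp (measurable_pi_apply (p, r))))
        (fun ω => rfl) (fun ω => rfl), hζint p r c h1 h2]
    simp only [hterm]
    rw [ENNReal.tsum_mul_right]
    congr 1
    rw [← lintegral_tsum (fun r => (hgmeas p r).aemeasurable), ← hεfirst p]
    exact lintegral_congr fun ω => inma_tsum_chi (ε p ω)
  -- expectation of a product of two thinned terms
  have hYY : ∀ (p p' : ℤ × ℤ) (c c' : ℕ × ℕ), c.1 ≤ q1 → c.2 ≤ q2 → c'.1 ≤ q1 → c'.2 ≤ q2 →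
      (p = p' → c ≠ c') →
      ∫⁻ ω, (∑ r ∈ range (ε p ω), (Z p r ω c : ℝ≥0∞))
          * (∑ r ∈ range (ε p' ω), (Z p' r ω c' : ℝ≥0∞)) ∂P
        = (∫⁻ ω, (ε p ω : ℝ≥0∞) * (ε p' ω : ℝ≥0∞) ∂P)
          * (ENNReal.ofReal (β c.1 c.2) * ENNReal.ofReal (β c'.1 c'.2)) := by
    intro p p' c c' h1 h2 h1' h2' hpcc
    have hFmeas : ∀ r r' : ℕ, Measurable (fun ω =>
        ((if r < ε p ω then (1:ℝ≥0∞) else 0) * (Z p r ω c : ℝ≥0∞))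
          * ((if r' < ε p' ω then (1:ℝ≥0∞) else 0) * (Z p' r' ω c' : ℝ≥0∞))) :=
      fun r r' => ((hgmeas p r).mul (hζmeas p r c)).mul ((hgmeas p' r').mul (hζmeas p' r' c'))
    have hpt : ∀ ω, (∑ r ∈ range (ε p ω), (Z p r ω c : ℝ≥0∞))
        * (∑ r ∈ range (ε p' ω), (Z p' r ω c' : ℝ≥0∞))
        = ∑' r : ℕ, ∑' r' : ℕ,
            ((if r < ε p ω then (1:ℝ≥0∞) else 0) * (Z p r ω c : ℝ≥0∞))
              * ((if r' < ε p' ω then (1:ℝ≥0∞) else 0) * (Z p' r' ω c' : ℝ≥0∞)) := by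
      intro ω
      rw [inma_cast_sum (ε p ω) (fun r => Z p r ω c),
        inma_cast_sum (ε p' ω) (fun r => Z p' r ω c'), ← ENNReal.tsum_mul_right]
      exact tsum_congr fun r => (ENNReal.tsum_mul_left).symm
    rw [lintegral_congr hpt, lintegral_tsum (fun r =>
      (Measurable.ennreal_tsum (fun r' => hFmeas r r')).aemeasurable)]
    have h1t : ∀ r : ℕ, ∫⁻ ω, ∑' r' : ℕ,
        ((if r < ε p ω then (1:ℝ≥0∞) else 0) * (Z p r ω c : ℝ≥0∞))
          * ((if r' < ε p' ω then (1:ℝ≥0∞) else 0) * (Z p' r' ω c' : ℝ≥0∞)) ∂P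
        = ∑' r' : ℕ, ∫⁻ ω,
        ((if r < ε p ω then (1:ℝ≥0∞) else 0) * (Z p r ω c : ℝ≥0∞))
          * ((if r' < ε p' ω then (1:ℝ≥0∞) else 0) * (Z p' r' ω c' : ℝ≥0∞)) ∂P :=
      fun r => lintegral_tsum fun r' => (hFmeas r r').aemeasurable
    simp only [h1t]
    have hterm : ∀ r r' : ℕ, ∫⁻ ω,
        ((if r < ε p ω then (1:ℝ≥0∞) else 0) * (Z p r ω c : ℝ≥0∞))
          * ((if r' < ε p' ω then (1:ℝ≥0∞) else 0) * (Z p' r' ω c' : ℝ≥0∞)) ∂P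
        = (∫⁻ ω, (if r < ε p ω then (1:ℝ≥0∞) else 0)
            * (if r' < ε p' ω then (1:ℝ≥0∞) else 0) ∂P)
          * (ENNReal.ofReal (β c.1 c.2) * ENNReal.ofReal (β c'.1 c'.2)) := by
      intro r r'
      have hpt2 : ∀ ω, ((if r < ε p ω then (1:ℝ≥0∞) else 0) * (Z p r ω c : ℝ≥0∞))
          * ((if r' < ε p' ω then (1:ℝ≥0∞) else 0) * (Z p' r' ω c' : ℝ≥0∞))
          = ((if r < ε p ω then (1:ℝ≥0∞) else 0) * (if r' < ε p' ω then (1:ℝ≥0∞) else 0))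
            * ((Z p r ω c : ℝ≥0∞) * (Z p' r' ω c' : ℝ≥0∞)) :=
        fun ω => mul_mul_mul_comm _ _ _ _
      have hd : (p, r) ≠ (p', r') ∨ c ≠ c' := by
        by_cases hpp : p = p'
        · exact Or.inr (hpcc hpp)
        · exact Or.inl (fun h => hpp (congrArg Prod.fst h))
      rw [lintegral_congr hpt2,
        hsplit (fun ω => (if r < ε p ω then (1:ℝ≥0∞) else 0)
            * (if r' < ε p' ω then (1:ℝ≥0∞) else 0))
          (fun ω => (Z p r ω c : ℝ≥0∞) * (Z p' r' ω c' : ℝ≥0∞))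
          (fun x => (if r < x p then (1:ℝ≥0∞) else 0) * (if r' < x p' then (1:ℝ≥0∞) else 0))
          (fun x => ((x (p, r) c : ℕ) : ℝ≥0∞) * ((x (p', r') c' : ℕ) : ℝ≥0∞))
          (((measurable_from_top (f := fun n : ℕ => if r < n then (1:ℝ≥0∞) else 0)).comp
            (measurable_pi_apply p)).mul
            ((measurable_from_top (f := fun n : ℕ => if r' < n then (1:ℝ≥0∞) else 0)).comp
            (measurable_pi_apply p')))
          ((measurable_from_top.comp ((measurable_pi_apply c).comp
            (measurable_pi_apply (p, r)))).fun_mul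
            (measurable_from_top.comp ((measurable_pi_apply c').comp
            (measurable_pi_apply (p', r')))))
          (fun ω => rfl) (fun ω => rfl),
        hζζ p p' r r' c c' hd h1 h2 h1' h2']
    simp only [hterm]
    simp only [ENNReal.tsum_mul_right]
    congr 1
    have h2t : ∀ r : ℕ, ∑' r' : ℕ, ∫⁻ ω, (if r < ε p ω then (1:ℝ≥0∞) else 0)
        * (if r' < ε p' ω then (1:ℝ≥0∞) else 0) ∂P
        = ∫⁻ ω, (if r < ε p ω then (1:ℝ≥0∞) else 0) * (ε p' ω : ℝ≥0∞) ∂P := by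
      intro r
      rw [← lintegral_tsum (fun r' => ((hgmeas p r).fun_mul (hgmeas p' r')).aemeasurable)]
      exact lintegral_congr fun ω => by rw [ENNReal.tsum_mul_left, inma_tsum_chi]
    simp only [h2t]
    rw [← lintegral_tsum (fun r => ((hgmeas p r).fun_mul (hεE p')).aemeasurable)]
    exact lintegral_congr fun ω => by rw [ENNReal.tsum_mul_right, inma_tsum_chi]
  -- finiteness of the moments
  have hBfin : B ≠ ⊤ := by
    have hpt : ∀ ω, ((ε (0, 0) ω : ℝ≥0∞)) ^ 2 = ENNReal.ofReal ((ε (0, 0) ω : ℝ) ^ 2) := by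
      intro ω
      rw [ENNReal.ofReal_pow (by positivity), ENNReal.ofReal_natCast]
    rw [hB, lintegral_congr hpt]
    exact hεL2.lintegral_lt_top.ne
  have hAfin : A ≠ ⊤ := by
    have hle : A ≤ B + 1 := by
      have h1 : ∀ ω, (ε (0, 0) ω : ℝ≥0∞) ≤ (ε (0, 0) ω : ℝ≥0∞) ^ 2 + 1 := by
        intro ω
        have h2 : (ε (0, 0) ω : ℕ) ≤ (ε (0, 0) ω) ^ 2 + 1 :=
          le_trans (Nat.le_self_pow two_ne_zero _) (Nat.le_succ _)
        calc (ε (0, 0) ω : ℝ≥0∞) ≤ (((ε (0, 0) ω) ^ 2 + 1 : ℕ) : ℝ≥0∞) := Nat.cast_le.2 h2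
          _ = (ε (0, 0) ω : ℝ≥0∞) ^ 2 + 1 := by push_cast; ring
      calc A ≤ ∫⁻ ω, ((ε (0, 0) ω : ℝ≥0∞) ^ 2 + 1) ∂P := by rw [hA]; exact lintegral_mono h1
        _ = B + 1 := by
            rw [lintegral_add_right _ measurable_const, lintegral_one, measure_univ, hB]
    exact ne_top_of_le_ne_top (ENNReal.add_ne_top.2 ⟨hBfin, ENNReal.one_ne_top⟩) hle
  -- measurability of the thinned sums and of X
  have hYm : ∀ (p : ℤ × ℤ) (c : ℕ × ℕ), Measurable (fun ω => ∑ r ∈ range (ε p ω), Z p r ω c) :=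
    fun p c => inma_meas_nat_comp (fun n => Finset.measurable_sum _
      (fun r _ => (measurable_pi_apply c).comp (hZmeas p r))) (hεmeas p)
  have hYmE : ∀ (p : ℤ × ℤ) (c : ℕ × ℕ),
      Measurable (fun ω => ∑ r ∈ range (ε p ω), (Z p r ω c : ℝ≥0∞)) := by
    intro p c
    have h : (fun ω => ∑ r ∈ range (ε p ω), (Z p r ω c : ℝ≥0∞))
        = fun ω => ((∑ r ∈ range (ε p ω), Z p r ω c : ℕ) : ℝ≥0∞) := by
      funext ω; rw [Nat.cast_sum]
    rw [h]
    exact measurable_from_top.comp (hYm p c)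
  have hXm : ∀ (s' t' : ℤ), Measurable (X s' t') := by
    intro s' t'
    have h : X s' t' = fun ω => ∑ i ∈ range (q1+1), ∑ j ∈ range (q2+1),
        ∑ r ∈ range (ε (s' - (i:ℤ), t' - (j:ℤ)) ω), Z (s' - (i:ℤ), t' - (j:ℤ)) r ω (i, j) :=
      funext (hX s' t')
    rw [h]
    exact Finset.measurable_sum _ fun i _ => Finset.measurable_sum _ fun j _ => hYm _ (i, j)
  -- conversion of Bochner integrals to lower Lebesgue integrals
  have hcast1 : ∀ (F : Ω → ℕ), Measurable F →
      ∫ ω, (F ω : ℝ) ∂P = (∫⁻ ω, (F ω : ℝ≥0∞) ∂P).toReal := by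
    intro F hF
    have hFm : Measurable fun ω => (F ω : ℝ) := measurable_from_top.comp hF
    rw [integral_eq_lintegral_of_nonneg_ae (Filter.Eventually.of_forall fun ω => by positivity)
      hFm.aestronglyMeasurable]
    congr 1
    exact lintegral_congr fun ω => ENNReal.ofReal_natCast _
  have hcast2 : ∀ (F G : Ω → ℕ), Measurable F → Measurable G →
      ∫ ω, (F ω : ℝ) * (G ω : ℝ) ∂P = (∫⁻ ω, (F ω : ℝ≥0∞) * (G ω : ℝ≥0∞) ∂P).toReal := by
    intro F G hF hG
    have hFm : Measurable fun ω => (F ω : ℝ) := measurable_from_top.comp hF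
    have hGm : Measurable fun ω => (G ω : ℝ) := measurable_from_top.comp hG
    have hFGm : Measurable fun ω => (F ω : ℝ) * (G ω : ℝ) := hFm.mul hGm
    rw [integral_eq_lintegral_of_nonneg_ae (Filter.Eventually.of_forall fun ω => by positivity)
      hFGm.aestronglyMeasurable]
    congr 1
    refine lintegral_congr fun ω => ?_
    rw [ENNReal.ofReal_mul (by positivity), ENNReal.ofReal_natCast, ENNReal.ofReal_natCast]
  -- identification of the variance
  have hvar : σε2 = B.toReal - A.toReal * A.toReal := by
    have hmeasR : Measurable (fun ω => (ε (0, 0) ω : ℝ)) :=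
      measurable_from_top.comp (hεmeas (0, 0))
    have hmm : MemLp (fun ω => (ε (0, 0) ω : ℝ)) 2 P :=
      (memLp_two_iff_integrable_sq hmeasR.aestronglyMeasurable).2 hεL2
    have eA : ∫ ω, (ε (0, 0) ω : ℝ) ∂P = A.toReal := hcast1 _ (hεmeas (0, 0))
    have eB : ∫ ω, ((ε (0, 0) ω : ℝ)) ^ 2 ∂P = B.toReal := by
      rw [integral_eq_lintegral_of_nonneg_ae (Filter.Eventually.of_forall fun ω => by positivity)
        (hmeasR.pow_const 2).aestronglyMeasurable, hB]
      congr 1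
      refine lintegral_congr fun ω => ?_
      rw [ENNReal.ofReal_pow (by positivity), ENNReal.ofReal_natCast]
    rw [hσε2, variance_eq_sub hmm]
    simp only [Pi.pow_apply]
    rw [eB, eA]
    ring
  -- the lower integral of X
  have hXpt : ∀ (s' t' : ℤ) (ω : Ω), ((X s' t' ω : ℕ) : ℝ≥0∞)
      = ∑ i ∈ range (q1+1), ∑ j ∈ range (q2+1),
          ∑ r ∈ range (ε (s' - (i:ℤ), t' - (j:ℤ)) ω),
            (Z (s' - (i:ℤ), t' - (j:ℤ)) r ω (i, j) : ℝ≥0∞) := by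
    intro s' t' ω
    rw [hX s' t' ω]
    push_cast
    rfl
  have hXlint : ∀ (s' t' : ℤ), ∫⁻ ω, ((X s' t' ω : ℕ) : ℝ≥0∞) ∂P
      = ∑ i ∈ range (q1+1), ∑ j ∈ range (q2+1), A * ENNReal.ofReal (β i j) := by
    intro s' t'
    rw [lintegral_congr (hXpt s' t'), lintegral_finset_sum _
      (fun i _ => Finset.measurable_sum _ fun j _ => hYmE _ (i, j))]
    refine Finset.sum_congr rfl fun i hi => ?_
    rw [lintegral_finset_sum _ (fun j _ => hYmE _ (i, j))]
    refine Finset.sum_congr rfl fun j hj => ?_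
    exact hY1 (s' - (i:ℤ), t' - (j:ℤ)) (i, j)
      (Nat.lt_succ_iff.1 (Finset.mem_range.1 hi))
      (Nat.lt_succ_iff.1 (Finset.mem_range.1 hj))
  -- the lower integral of the product X * X'
  have hdistrib : ∀ (u v : ℕ → ℕ → ℝ≥0∞),
      (∑ i ∈ range (q1+1), ∑ j ∈ range (q2+1), u i j)
        * (∑ i' ∈ range (q1+1), ∑ j' ∈ range (q2+1), v i' j')
      = ∑ i ∈ range (q1+1), ∑ j ∈ range (q2+1), ∑ i' ∈ range (q1+1), ∑ j' ∈ range (q2+1),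
          u i j * v i' j' := by
    intro u v
    rw [Finset.sum_mul]
    refine Finset.sum_congr rfl fun i _ => ?_
    rw [Finset.sum_mul]
    refine Finset.sum_congr rfl fun j _ => ?_
    rw [Finset.mul_sum]
    refine Finset.sum_congr rfl fun i' _ => ?_
    rw [Finset.mul_sum]
  have hXXlint : ∫⁻ ω, ((X s t ω : ℕ) : ℝ≥0∞) * ((X (s - (k:ℤ)) (t - (l:ℤ)) ω : ℕ) : ℝ≥0∞) ∂P
      = ∑ i ∈ range (q1+1), ∑ j ∈ range (q2+1), ∑ i' ∈ range (q1+1), ∑ j' ∈ range (q2+1),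
          (if i = k + i' ∧ j = l + j' then B else A * A)
            * (ENNReal.ofReal (β i j) * ENNReal.ofReal (β i' j')) := by
    have hpt : ∀ ω, ((X s t ω : ℕ) : ℝ≥0∞) * ((X (s - (k:ℤ)) (t - (l:ℤ)) ω : ℕ) : ℝ≥0∞)
        = ∑ i ∈ range (q1+1), ∑ j ∈ range (q2+1), ∑ i' ∈ range (q1+1), ∑ j' ∈ range (q2+1),
            (∑ r ∈ range (ε (s - (i:ℤ), t - (j:ℤ)) ω),
              (Z (s - (i:ℤ), t - (j:ℤ)) r ω (i, j) : ℝ≥0∞))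
            * (∑ r ∈ range (ε (s - (k:ℤ) - (i':ℤ), t - (l:ℤ) - (j':ℤ)) ω),
              (Z (s - (k:ℤ) - (i':ℤ), t - (l:ℤ) - (j':ℤ)) r ω (i', j') : ℝ≥0∞)) := by
      intro ω
      rw [hXpt s t ω, hXpt (s - (k:ℤ)) (t - (l:ℤ)) ω]
      exact hdistrib _ _
    rw [lintegral_congr hpt, lintegral_finset_sum _ (fun i _ => Finset.measurable_sum _
      fun j _ => Finset.measurable_sum _ fun i' _ => Finset.measurable_sum _
      fun j' _ => (hYmE _ (i, j)).fun_mul (hYmE _ (i', j')))]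
    refine Finset.sum_congr rfl fun i hi => ?_
    rw [lintegral_finset_sum _ (fun j _ => Finset.measurable_sum _ fun i' _ =>
      Finset.measurable_sum _ fun j' _ => (hYmE _ (i, j)).fun_mul (hYmE _ (i', j')))]
    refine Finset.sum_congr rfl fun j hj => ?_
    rw [lintegral_finset_sum _ (fun i' _ => Finset.measurable_sum _ fun j' _ =>
      (hYmE _ (i, j)).fun_mul (hYmE _ (i', j')))]
    refine Finset.sum_congr rfl fun i' hi' => ?_
    rw [lintegral_finset_sum _ (fun j' _ => (hYmE _ (i, j)).fun_mul (hYmE _ (i', j')))]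
    refine Finset.sum_congr rfl fun j' hj' => ?_
    have hne : (s - (i:ℤ), t - (j:ℤ)) = (s - (k:ℤ) - (i':ℤ), t - (l:ℤ) - (j':ℤ))
        → ((i, j) : ℕ × ℕ) ≠ (i', j') := by
      intro hpe hce
      rw [Prod.mk.injEq] at hpe hce
      apply hkl
      rw [Prod.mk.injEq]
      constructor <;> omega
    rw [hYY (s - (i:ℤ), t - (j:ℤ)) (s - (k:ℤ) - (i':ℤ), t - (l:ℤ) - (j':ℤ)) (i, j) (i', j')
      (Nat.lt_succ_iff.1 (Finset.mem_range.1 hi)) (Nat.lt_succ_iff.1 (Finset.mem_range.1 hj))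
      (Nat.lt_succ_iff.1 (Finset.mem_range.1 hi')) (Nat.lt_succ_iff.1 (Finset.mem_range.1 hj'))
      hne, hE]
    have hcond : ((s - (i:ℤ), t - (j:ℤ)) = (s - (k:ℤ) - (i':ℤ), t - (l:ℤ) - (j':ℤ)))
        ↔ (i = k + i' ∧ j = l + j') := by
      rw [Prod.mk.injEq]
      constructor <;> intro h <;> exact ⟨by omega, by omega⟩
    congr 1
    exact if_congr hcond rfl rfl
  -- passing to real numbers
  have hterm_ne : ∀ i j i' j' : ℕ,
      ((if i = k + i' ∧ j = l + j' then B else A * A)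
        * (ENNReal.ofReal (β i j) * ENNReal.ofReal (β i' j'))) ≠ ⊤ := by
    intro i j i' j'
    refine ENNReal.mul_ne_top ?_ (ENNReal.mul_ne_top ENNReal.ofReal_ne_top ENNReal.ofReal_ne_top)
    split_ifs
    · exact hBfin
    · exact ENNReal.mul_ne_top hAfin hAfin
  have hq4 : (∑ i ∈ range (q1+1), ∑ j ∈ range (q2+1), ∑ i' ∈ range (q1+1),
        ∑ j' ∈ range (q2+1), (if i = k + i' ∧ j = l + j' then B else A * A)
          * (ENNReal.ofReal (β i j) * ENNReal.ofReal (β i' j'))).toReal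
      = ∑ i ∈ range (q1+1), ∑ j ∈ range (q2+1), ∑ i' ∈ range (q1+1), ∑ j' ∈ range (q2+1),
          (if i = k + i' ∧ j = l + j' then B.toReal else A.toReal * A.toReal)
            * (β i j * β i' j') := by
    rw [ENNReal.toReal_sum (fun i _ => ENNReal.sum_ne_top.2 fun j _ => ENNReal.sum_ne_top.2
      fun i' _ => ENNReal.sum_ne_top.2 fun j' _ => hterm_ne i j i' j')]
    refine Finset.sum_congr rfl fun i hi => ?_
    rw [ENNReal.toReal_sum (fun j _ => ENNReal.sum_ne_top.2 fun i' _ => ENNReal.sum_ne_top.2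
      fun j' _ => hterm_ne i j i' j')]
    refine Finset.sum_congr rfl fun j hj => ?_
    rw [ENNReal.toReal_sum (fun i' _ => ENNReal.sum_ne_top.2 fun j' _ => hterm_ne i j i' j')]
    refine Finset.sum_congr rfl fun i' hi' => ?_
    rw [ENNReal.toReal_sum (fun j' _ => hterm_ne i j i' j')]
    refine Finset.sum_congr rfl fun j' hj' => ?_
    rw [ENNReal.toReal_mul, ENNReal.toReal_mul, apply_ite ENNReal.toReal, ENNReal.toReal_mul,
      ENNReal.toReal_ofReal (hβ i (Nat.lt_succ_iff.1 (Finset.mem_range.1 hi)) j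
        (Nat.lt_succ_iff.1 (Finset.mem_range.1 hj))).1,
      ENNReal.toReal_ofReal (hβ i' (Nat.lt_succ_iff.1 (Finset.mem_range.1 hi')) j'
        (Nat.lt_succ_iff.1 (Finset.mem_range.1 hj'))).1]
  have hq2 : (∑ i ∈ range (q1+1), ∑ j ∈ range (q2+1), A * ENNReal.ofReal (β i j)).toReal
      = ∑ i ∈ range (q1+1), ∑ j ∈ range (q2+1), A.toReal * β i j := by
    rw [ENNReal.toReal_sum (fun i _ => ENNReal.sum_ne_top.2 fun j _ =>
      ENNReal.mul_ne_top hAfin ENNReal.ofReal_ne_top)]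
    refine Finset.sum_congr rfl fun i hi => ?_
    rw [ENNReal.toReal_sum (fun j _ => ENNReal.mul_ne_top hAfin ENNReal.ofReal_ne_top)]
    refine Finset.sum_congr rfl fun j hj => ?_
    rw [ENNReal.toReal_mul, ENNReal.toReal_ofReal
      (hβ i (Nat.lt_succ_iff.1 (Finset.mem_range.1 hi)) j
        (Nat.lt_succ_iff.1 (Finset.mem_range.1 hj))).1]
  rw [hcast2 (X s t) (X (s - (k:ℤ)) (t - (l:ℤ))) (hXm s t) (hXm _ _),
    hcast1 (X s t) (hXm s t), hcast1 (X (s - (k:ℤ)) (t - (l:ℤ))) (hXm _ _),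
    hXXlint, hXlint s t, hXlint (s - (k:ℤ)) (t - (l:ℤ)), hq4, hq2]
  exact inma_final_alg q1 q2 k l hk hl β B.toReal A.toReal σε2 hvar
end

section
/- For the INMA(q1,q2) random field under the spread model, i.e., when β_• ≤ 1 and each vector Z_{s,t;r} is multinomially distributed as MULT(1; β_{00},…,β_{q1q2}) (so at most one component of Z_{s,t;r} equals 1, with P(Z_{s,t;r}^{(i,j)} = 1) = β_{ij}), the autocovariance function satisfies, for every lag (k,l) ≠ (0,0) with 0 ≤ k ≤ q1 and 0 ≤ l ≤ q2, γ(k,l) := Cov(X_{s,t}, X_{s−k,t−l}) = (σ_ε² − μ_ε) · ∑_{i=k}^{q1} ∑_{j=l}^{q2} β_{i,j} β_{i−k,j−l}. (Example: spread model.) -/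
open MeasureTheory ProbabilityTheory Finset

section AuxINMA

/-- Combine two independent families, independent of each other, into one family. -/
lemma iIndepFun_sum_elim' {Ω ι κ γ : Type*} [MeasurableSpace Ω] {P : Measure Ω}
    [Countable ι] [Countable κ] [MeasurableSpace γ]
    {f : ι → Ω → γ} {g : κ → Ω → γ}
    (hf : iIndepFun f P)
    (hg : iIndepFun g P)
    (h : IndepFun (fun ω i => f i ω) (fun ω j => g j ω) P) :
    iIndepFun (Sum.elim f g) P := by
  classical
  rw [iIndepFun_iff_measure_inter_preimage_eq_mul]
  intro S sets hsets
  have hIf : (⋂ i ∈ S.toLeft, f i ⁻¹' sets (Sum.inl i))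
      = (fun ω i => f i ω) ⁻¹' Set.pi (S.toLeft : Set ι) (fun i => sets (Sum.inl i)) := by
    ext ω
    simp [Set.mem_pi]
  have hIg : (⋂ j ∈ S.toRight, g j ⁻¹' sets (Sum.inr j))
      = (fun ω j => g j ω) ⁻¹' Set.pi (S.toRight : Set κ) (fun j => sets (Sum.inr j)) := by
    ext ω
    simp [Set.mem_pi]
  have hI : (⋂ i ∈ S, Sum.elim f g i ⁻¹' sets i)
      = (⋂ i ∈ S.toLeft, f i ⁻¹' sets (Sum.inl i))
        ∩ (⋂ j ∈ S.toRight, g j ⁻¹' sets (Sum.inr j)) := by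
    ext ω
    simp only [Set.mem_iInter, Set.mem_inter_iff, Set.mem_preimage, Finset.mem_toLeft,
      Finset.mem_toRight]
    constructor
    · intro H
      exact ⟨fun i hi => H _ hi, fun j hj => H _ hj⟩
    · rintro ⟨H1, H2⟩ i hi
      cases i with
      | inl a => exact H1 a hi
      | inr b => exact H2 b hi
  have hmf : MeasurableSet (Set.pi (S.toLeft : Set ι) (fun i => sets (Sum.inl i))) :=
    MeasurableSet.pi (Set.to_countable _)
      (fun i hi => hsets (Sum.inl i) (by simpa using hi))
  have hmg : MeasurableSet (Set.pi (S.toRight : Set κ) (fun j => sets (Sum.inr j))) :=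
    MeasurableSet.pi (Set.to_countable _)
      (fun j hj => hsets (Sum.inr j) (by simpa using hj))
  have hsplit := h.measure_inter_preimage_eq_mul _ _ hmf hmg
  have h1 := hf.measure_inter_preimage_eq_mul (sets := fun i => sets (Sum.inl i)) S.toLeft
    (fun i hi => hsets (Sum.inl i) (by simpa using hi))
  have h2 := hg.measure_inter_preimage_eq_mul (sets := fun j => sets (Sum.inr j)) S.toRight
    (fun j hj => hsets (Sum.inr j) (by simpa using hj))
  rw [hI, hIf, hIg, hsplit, ← hIf, ← hIg, h1, h2]
  rw [← Finset.toLeft_disjSum_toRight (u := S), Finset.prod_disjSum]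
  simp

/-- From joint independence of a family, functions measurable w.r.t. the σ-algebras generated
by disjoint sub-collections are independent. -/
lemma indepFun_of_measurable_iSup {Ω ι : Type*} [MeasurableSpace Ω] {P : Measure Ω}
    {γ : Type*} [MeasurableSpace γ] {W : ι → Ω → γ}
    (hW : iIndepFun W P) (hWm : ∀ i, Measurable (W i))
    {S T : Set ι} (hST : Disjoint S T)
    {E F : Type*} [MeasurableSpace E] [MeasurableSpace F] {φ : Ω → E} {ψ : Ω → F}
    (hφ : Measurable[⨆ i ∈ S, MeasurableSpace.comap (W i) inferInstance] φ)
    (hψ : Measurable[⨆ i ∈ T, MeasurableSpace.comap (W i) inferInstance] ψ) :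
    IndepFun φ ψ P := by
  have h := indep_iSup_of_disjoint
      (m := fun i => MeasurableSpace.comap (W i) inferInstance)
      (fun i => (hWm i).comap_le) hW.iIndep hST
  rw [indepFun_iff_measure_inter_preimage_eq_mul]
  intro u v hu hv
  exact (Indep_iff _ _ _).1 h _ _ (hφ hu) (hψ hv)

/-- Partitioning an integral along the fibers of an ℕ-valued random variable. -/
lemma hasSum_integral_fiber {Ω : Type*} [MeasurableSpace Ω] {P : Measure Ω}
    {N : Ω → ℕ} (hN : Measurable N) {f : Ω → ℝ} (hf : Integrable f P) :
    HasSum (fun n => ∫ ω in N ⁻¹' {n}, f ω ∂P) (∫ ω, f ω ∂P) := by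
  have hu : (⋃ n, N ⁻¹' {n}) = Set.univ := by
    ext ω; simp
  have hd : Pairwise (Function.onFun Disjoint fun n => N ⁻¹' {n}) := by
    intro n m hnm
    rw [Function.onFun, Set.disjoint_left]
    rintro ω h1 h2
    exact hnm (by simp only [Set.mem_preimage, Set.mem_singleton_iff] at h1 h2; omega)
  have := hasSum_integral_iUnion (μ := P) (f := f)
      (fun n => hN (measurableSet_singleton n)) hd (by rw [hu]; exact hf.integrableOn)
  rwa [hu, setIntegral_univ] at this

lemma measurable_of_comap_le' {Ω γ : Type*} {m : MeasurableSpace Ω} [mγ : MeasurableSpace γ]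
    {f : Ω → γ} (h : MeasurableSpace.comap f mγ ≤ m) : Measurable[m] f :=
  fun _s hs => h _ ⟨_, hs, rfl⟩

lemma measurable_comp' {Ω γ δ : Type*} {m : MeasurableSpace Ω} [MeasurableSpace γ]
    [MeasurableSpace δ] {f : Ω → γ} {g : γ → δ} (hf : Measurable[m] f) (hg : Measurable g) :
    Measurable[m] (fun ω => g (f ω)) :=
  fun _s hs => hf (hg hs)

lemma measurable_pi_lambda' {Ω δ : Type*} {π : δ → Type*} {m : MeasurableSpace Ω}
    [∀ a, MeasurableSpace (π a)] (f : Ω → ∀ a, π a)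
    (hf : ∀ a, Measurable[m] fun ω => f ω a) : Measurable[m] f :=
  measurable_pi_lambda f hf

/-- A random finite sum is measurable (w.r.t. any σ-algebra making the data measurable). -/
lemma measurable_randsum {Ω : Type*} {m : MeasurableSpace Ω} {N : Ω → ℕ} {A : ℕ → Ω → ℝ}
    (hN : Measurable[m] N) (hA : ∀ r, Measurable[m] (A r)) :
    Measurable[m] (fun ω => ∑ r ∈ Finset.range (N ω), A r ω) := by
  have : (fun ω => ∑ r ∈ Finset.range (N ω), A r ω)
      = (fun x : (ℕ → ℝ) × ℕ => ∑ r ∈ Finset.range x.2, x.1 r)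
        ∘ (fun ω => ((fun r => A r ω), N ω)) := rfl
  rw [this]
  refine Measurable.comp ?_ ((measurable_pi_lambda _ hA).prodMk hN)
  refine measurable_from_prod_countable_left fun n => ?_
  simp only []
  exact Finset.measurable_sum (Finset.range n) (fun r _ => measurable_pi_apply r)

/-- Double-sum over off-diagonal constant. -/
lemma sum_offdiag_const (n : ℕ) (x : ℝ) :
    (∑ r ∈ range n, ∑ r' ∈ range n, if r = r' then 0 else x)
      = ((n : ℝ) ^ 2 - n) * x := by
  have h1 : ∀ r ∈ range n, (∑ r' ∈ range n, if r = r' then (0:ℝ) else x)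
      = (n : ℝ) * x - x := by
    intro r hr
    have h2 : ∀ r' : ℕ, (if r = r' then (0:ℝ) else x) = x - (if r = r' then x else 0) := by
      intro r'; split <;> ring
    simp_rw [h2]
    rw [Finset.sum_sub_distrib, Finset.sum_const, Finset.sum_ite_eq, if_pos hr, card_range,
      nsmul_eq_mul]
  rw [Finset.sum_congr rfl h1, Finset.sum_const, card_range, nsmul_eq_mul]
  ring

/-- The combinatorial reindexing for the matched pairs. -/
lemma sum_matched_pairs (q1 q2 k l : ℕ) (hk : k ≤ q1) (hl : l ≤ q2) (v : ℝ) (β : ℕ → ℕ → ℝ) :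
    (∑ c ∈ (range (q1+1)) ×ˢ (range (q2+1)), ∑ c' ∈ (range (q1+1)) ×ˢ (range (q2+1)),
      (if c.1 = k + c'.1 ∧ c.2 = l + c'.2 then v * (β c.1 c.2 * β c'.1 c'.2) else 0))
      = v * ∑ i ∈ Icc k q1, ∑ j ∈ Icc l q2, β i j * β (i - k) (j - l) := by
  classical
  rw [Finset.sum_comm]
  have h1 : ∀ c' ∈ (range (q1+1)) ×ˢ (range (q2+1)),
      (∑ c ∈ (range (q1+1)) ×ˢ (range (q2+1)),
        if c.1 = k + c'.1 ∧ c.2 = l + c'.2 then v * (β c.1 c.2 * β c'.1 c'.2) else 0)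
      = (if k + c'.1 ≤ q1 ∧ l + c'.2 ≤ q2
          then v * (β (k + c'.1) (l + c'.2) * β c'.1 c'.2) else 0) := by
    intro c' _
    have h2 : ∀ c : ℕ × ℕ, (c.1 = k + c'.1 ∧ c.2 = l + c'.2) ↔ c = (k + c'.1, l + c'.2) := by
      intro c; rw [Prod.ext_iff]
    simp_rw [h2]
    rw [Finset.sum_ite_eq' ((range (q1+1)) ×ˢ (range (q2+1))) ((k + c'.1, l + c'.2) : ℕ × ℕ)
      (fun c => v * (β c.1 c.2 * β c'.1 c'.2))]
    simp [Finset.mem_product, Nat.lt_succ_iff]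
  rw [Finset.sum_congr rfl h1, ← Finset.sum_filter]
  have h3 : v * ∑ i ∈ Icc k q1, ∑ j ∈ Icc l q2, β i j * β (i - k) (j - l)
      = ∑ d ∈ (Icc k q1) ×ˢ (Icc l q2), v * (β d.1 d.2 * β (d.1 - k) (d.2 - l)) := by
    rw [Finset.sum_product]
    simp_rw [Finset.mul_sum]
  rw [h3]
  refine Finset.sum_nbij' (i := fun c' : ℕ × ℕ => ((k + c'.1, l + c'.2) : ℕ × ℕ))
    (j := fun d : ℕ × ℕ => ((d.1 - k, d.2 - l) : ℕ × ℕ)) ?_ ?_ ?_ ?_ ?_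
  · intro a ha
    simp only [Finset.mem_filter, Finset.mem_product, Finset.mem_range, Nat.lt_succ_iff,
      Finset.mem_Icc] at ha ⊢
    omega
  · intro d hd
    simp only [Finset.mem_filter, Finset.mem_product, Finset.mem_range, Nat.lt_succ_iff,
      Finset.mem_Icc] at hd ⊢
    omega
  · intro a ha
    obtain ⟨a1, a2⟩ := a
    simp only [Prod.mk.injEq]
    omega
  · intro d hd
    simp only [Finset.mem_product, Finset.mem_Icc] at hd
    obtain ⟨d1, d2⟩ := d
    simp only [Prod.mk.injEq]
    simp only [Prod.fst, Prod.snd] at hd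
    omega
  · intro a ha
    simp only [Finset.mem_filter, Finset.mem_product, Finset.mem_range, Nat.lt_succ_iff] at ha
    have e1 : k + a.1 - k = a.1 := by omega
    have e2 : l + a.2 - l = a.2 := by omega
    rw [e1, e2]

end AuxINMA

/-- Spread model: the ACvF equals `(σ_ε² - μ_ε) ∑∑ β_{ij} β_{i-k,j-l}` for (k,l) ≠ (0,0). -/
theorem inma_spread_model_acvf
    {Ω : Type*} [MeasurableSpace Ω] (P : Measure Ω) [IsProbabilityMeasure P]
    (q1 q2 : ℕ) (hq : 1 ≤ q1 + q2)
    (β : ℕ → ℕ → ℝ)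
    (hβ : ∀ i ≤ q1, ∀ j ≤ q2, β i j ∈ Set.Icc (0 : ℝ) 1)
    -- the i.i.d. innovations, with finite mean and variance
    (ε : ℤ × ℤ → Ω → ℕ) (hεmeas : ∀ p, Measurable (ε p))
    (hεiid : iIndepFun ε P)
    (hεid : ∀ p, Measure.map (ε p) P = Measure.map (ε (0, 0)) P)
    (hεL2 : Integrable (fun ω => ((ε (0, 0) ω : ℝ)) ^ 2) P)
    (με : ℝ) (hμε : με = ∫ ω, (ε (0, 0) ω : ℝ) ∂P)
    (σε2 : ℝ) (hσε2 : σε2 = variance (fun ω => (ε (0, 0) ω : ℝ)) P)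
    -- the counting-series vectors, i.i.d., with {0,1}-valued components
    (Z : ℤ × ℤ → ℕ → Ω → ℕ × ℕ → ℕ)
    (hZmeas : ∀ p r, Measurable (Z p r))
    (hZ01 : ∀ p r ω ij, Z p r ω ij ≤ 1)
    (hZiid : iIndepFun
      (fun pr : (ℤ × ℤ) × ℕ => Z pr.1 pr.2) P)
    (hZid : ∀ p r, Measure.map (Z p r) P = Measure.map (Z (0, 0) 0) P)
    (hZβ : ∀ p r, ∀ i ≤ q1, ∀ j ≤ q2,
      P {ω | Z p r ω (i, j) = 1} = ENNReal.ofReal (β i j))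
    -- the whole thinning family is independent of the innovation family
    (hindep : IndepFun (fun ω p => ε p ω)
      (fun ω (pr : (ℤ × ℤ) × ℕ) => Z pr.1 pr.2 ω) P)
    -- the INMA(q1,q2) random field
    (X : ℤ → ℤ → Ω → ℕ)
    (hX : ∀ s t ω, X s t ω =
      ∑ i ∈ range (q1 + 1), ∑ j ∈ range (q2 + 1),
        ∑ r ∈ range (ε (s - (i : ℤ), t - (j : ℤ)) ω),
          Z (s - (i : ℤ), t - (j : ℤ)) r ω (i, j))
    -- spread model: each Z_{s,t;r} is MULT(1; β_00, …, β_{q1 q2}) distributed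
    (hβsum : (∑ i ∈ range (q1 + 1), ∑ j ∈ range (q2 + 1), β i j) ≤ 1)
    (hmult1 : ∀ p r, ∀ i ≤ q1, ∀ j ≤ q2,
      P {ω | Z p r ω = fun ij => if ij = (i, j) then 1 else 0} = ENNReal.ofReal (β i j))
    (hmult0 : ∀ p r, P {ω | Z p r ω = fun _ => 0} =
      ENNReal.ofReal (1 - ∑ i ∈ range (q1 + 1), ∑ j ∈ range (q2 + 1), β i j))
    (s t : ℤ) (k l : ℕ) (hk : k ≤ q1) (hl : l ≤ q2) (hkl : (k, l) ≠ (0, 0)) :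
    (∫ ω, (X s t ω : ℝ) * (X (s - (k : ℤ)) (t - (l : ℤ)) ω : ℝ) ∂P)
      - (∫ ω, (X s t ω : ℝ) ∂P) * (∫ ω, (X (s - (k : ℤ)) (t - (l : ℤ)) ω : ℝ) ∂P) =
      (σε2 - με) * ∑ i ∈ Icc k q1, ∑ j ∈ Icc l q2, β i j * β (i - k) (j - l) := by
  classical
  -- notation
  set G : Finset (ℕ × ℕ) := (range (q1+1)) ×ˢ (range (q2+1)) with hGdef
  have hGmem : ∀ c : ℕ × ℕ, c ∈ G → c.1 ≤ q1 ∧ c.2 ≤ q2 := by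
    intro c hc
    rw [hGdef, Finset.mem_product, Finset.mem_range, Finset.mem_range] at hc
    omega
  have hβnn : ∀ c : ℕ × ℕ, c.1 ≤ q1 → c.2 ≤ q2 → 0 ≤ β c.1 c.2 :=
    fun c h1 h2 => (hβ c.1 h1 c.2 h2).1
  -- basic measurability
  have hZm1 : ∀ p r (c : ℕ × ℕ), Measurable (fun ω => (Z p r ω c : ℝ)) :=
    fun p r c => (measurable_of_countable (fun m : ℕ => (m : ℝ))).comp
      ((measurable_pi_apply c).comp (hZmeas p r))
  have hUmeas : ∀ p (c : ℕ × ℕ),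
      Measurable (fun ω => ∑ r ∈ range (ε p ω), (Z p r ω c : ℝ)) :=
    fun p c => measurable_randsum (hεmeas p) (fun r => hZm1 p r c)
  have hUnn : ∀ p (c : ℕ × ℕ) ω, 0 ≤ ∑ r ∈ range (ε p ω), (Z p r ω c : ℝ) :=
    fun p c ω => Finset.sum_nonneg fun r _ => Nat.cast_nonneg _
  have hUle : ∀ p (c : ℕ × ℕ) ω,
      (∑ r ∈ range (ε p ω), (Z p r ω c : ℝ)) ≤ (ε p ω : ℝ) := by
    intro p c ω
    calc (∑ r ∈ range (ε p ω), (Z p r ω c : ℝ))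
        ≤ ∑ _r ∈ range (ε p ω), (1 : ℝ) :=
          Finset.sum_le_sum (fun r _ => by exact_mod_cast hZ01 p r ω c)
      _ = (ε p ω : ℝ) := by simp
  -- integrability and moments of the innovations
  have hεint2 : ∀ p, Integrable (fun ω => (ε p ω : ℝ) ^ 2) P := by
    intro p
    have h0 : Integrable (fun n : ℕ => (n : ℝ) ^ 2) (Measure.map (ε (0, 0)) P) :=
      (integrable_map_measure (measurable_of_countable _).aestronglyMeasurable
        (hεmeas (0, 0)).aemeasurable).2 hεL2
    have h1 : Integrable (fun n : ℕ => (n : ℝ) ^ 2) (Measure.map (ε p) P) := by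
      rw [hεid p]; exact h0
    exact (integrable_map_measure (measurable_of_countable _).aestronglyMeasurable
      (hεmeas p).aemeasurable).1 h1
  have hεL2' : ∀ p, MemLp (fun ω => (ε p ω : ℝ)) 2 P := fun p =>
    (memLp_two_iff_integrable_sq
      ((measurable_of_countable (fun n : ℕ => (n : ℝ))).comp
        (hεmeas p)).aestronglyMeasurable).2 (hεint2 p)
  have hεint1 : ∀ p, Integrable (fun ω => (ε p ω : ℝ)) P :=
    fun p => (hεL2' p).integrable one_le_two
  have hεmean : ∀ p, ∫ ω, (ε p ω : ℝ) ∂P = με := by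
    intro p
    have h1 : ∫ ω, (ε p ω : ℝ) ∂P = ∫ n, (n : ℝ) ∂(Measure.map (ε p) P) :=
      (integral_map (f := fun n : ℕ => (n : ℝ)) (hεmeas p).aemeasurable
        (measurable_of_countable _).aestronglyMeasurable).symm
    have h2 : ∫ ω, (ε (0, 0) ω : ℝ) ∂P = ∫ n, (n : ℝ) ∂(Measure.map (ε (0, 0)) P) :=
      (integral_map (f := fun n : ℕ => (n : ℝ)) (hεmeas (0, 0)).aemeasurable
        (measurable_of_countable _).aestronglyMeasurable).symm
    rw [hμε, h1, hεid p, ← h2]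
  have hεsq : ∀ p, ∫ ω, (ε p ω : ℝ) ^ 2 ∂P = σε2 + με ^ 2 := by
    have h00 : ∫ ω, (ε (0, 0) ω : ℝ) ^ 2 ∂P = σε2 + με ^ 2 := by
      have hv : variance (fun ω => (ε (0, 0) ω : ℝ)) P
          = ∫ ω, (ε (0, 0) ω : ℝ) ^ 2 ∂P - (∫ ω, (ε (0, 0) ω : ℝ) ∂P) ^ 2 :=
        variance_eq_sub (hεL2' (0, 0))
      rw [hσε2, hv, ← hμε]; ring
    intro p
    have h1 : ∫ ω, (ε p ω : ℝ) ^ 2 ∂P = ∫ n, ((n : ℝ) ^ 2) ∂(Measure.map (ε p) P) :=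
      (integral_map (f := fun n : ℕ => (n : ℝ) ^ 2) (hεmeas p).aemeasurable
        (measurable_of_countable _).aestronglyMeasurable).symm
    have h2 : ∫ ω, (ε (0, 0) ω : ℝ) ^ 2 ∂P = ∫ n, ((n : ℝ) ^ 2) ∂(Measure.map (ε (0, 0)) P) :=
      (integral_map (f := fun n : ℕ => (n : ℝ) ^ 2) (hεmeas (0, 0)).aemeasurable
        (measurable_of_countable _).aestronglyMeasurable).symm
    rw [h1, hεid p, ← h2, h00]
  -- integrals of the thinning indicators
  have hZint : ∀ p r (c : ℕ × ℕ), Integrable (fun ω => (Z p r ω c : ℝ)) P := by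
    intro p r c
    refine Integrable.mono' (integrable_const (1 : ℝ)) (hZm1 p r c).aestronglyMeasurable
      (ae_of_all _ fun ω => ?_)
    rw [Real.norm_eq_abs, abs_of_nonneg (Nat.cast_nonneg _)]
    exact_mod_cast hZ01 p r ω c
  have hZval : ∀ p r (c : ℕ × ℕ), c.1 ≤ q1 → c.2 ≤ q2 →
      ∫ ω, (Z p r ω c : ℝ) ∂P = β c.1 c.2 := by
    rintro p r ⟨i, j⟩ hi hj
    have hset : MeasurableSet {ω | Z p r ω (i, j) = 1} :=
      ((measurable_pi_apply ((i, j) : ℕ × ℕ)).comp (hZmeas p r)) (measurableSet_singleton 1)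
    have heq : (fun ω => (Z p r ω (i, j) : ℝ))
        = Set.indicator {ω | Z p r ω (i, j) = 1} (fun _ => (1 : ℝ)) := by
      funext ω
      rcases Nat.le_one_iff_eq_zero_or_eq_one.1 (hZ01 p r ω (i, j)) with h | h <;>
        simp [Set.indicator, h]
    rw [heq, integral_indicator_const (1 : ℝ) hset, measureReal_def, hZβ p r i hi j hj, smul_eq_mul, mul_one,
      ENNReal.toReal_ofReal ((hβ i hi j hj).1)]
  have hZZint : ∀ p r r' (c c' : ℕ × ℕ),
      Integrable (fun ω => (Z p r ω c : ℝ) * (Z p r' ω c' : ℝ)) P := by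
    intro p r r' c c'
    refine Integrable.mono' (integrable_const (1 : ℝ))
      ((hZm1 p r c).mul (hZm1 p r' c')).aestronglyMeasurable (ae_of_all _ fun ω => ?_)
    rw [Real.norm_eq_abs, abs_of_nonneg (mul_nonneg (Nat.cast_nonneg _) (Nat.cast_nonneg _))]
    have h1 : (Z p r ω c : ℝ) ≤ 1 := by exact_mod_cast hZ01 p r ω c
    have h2 : (Z p r' ω c' : ℝ) ≤ 1 := by exact_mod_cast hZ01 p r' ω c'
    calc (Z p r ω c : ℝ) * (Z p r' ω c' : ℝ) ≤ 1 * 1 :=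
          mul_le_mul h1 h2 (Nat.cast_nonneg _) (by norm_num)
      _ = 1 := by norm_num
  -- the multinomial (spread) structure: diagonal products vanish a.s.
  have hsingle : ∀ (f0 : ℕ × ℕ → ℕ) (p : ℤ × ℤ) (r : ℕ), MeasurableSet {ω | Z p r ω = f0} := by
    intro f0 p r
    have h : {ω | Z p r ω = f0} = ⋂ ij : ℕ × ℕ, (fun ω => Z p r ω ij) ⁻¹' {f0 ij} := by
      ext ω
      simp [funext_iff]
    rw [h]
    exact MeasurableSet.iInter fun ij =>
      ((measurable_pi_apply ij).comp (hZmeas p r)) (measurableSet_singleton _)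
  have hdiag : ∀ p r (c c' : ℕ × ℕ), c.1 ≤ q1 → c.2 ≤ q2 → c'.1 ≤ q1 → c'.2 ≤ q2 → c ≠ c' →
      ∀ᵐ ω ∂P, (Z p r ω c : ℝ) * (Z p r ω c' : ℝ) = 0 := by
    intro p r c c' hc1 hc2 hc1' hc2' hcc'
    have hdisjUnion : Set.PairwiseDisjoint (↑G)
        (fun d : ℕ × ℕ => {ω | Z p r ω = fun ij => if ij = d then 1 else 0}) := by
      intro d _ d' _ hdd'
      rw [Function.onFun, Set.disjoint_left]
      rintro ω h1 h2
      simp only [Set.mem_setOf_eq] at h1 h2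
      have h3 := congrFun (h1.symm.trans h2) d
      simp [hdd'] at h3
    have hPU : P (⋃ d ∈ G, {ω | Z p r ω = fun ij => if ij = d then 1 else 0})
        = ENNReal.ofReal (∑ i ∈ range (q1+1), ∑ j ∈ range (q2+1), β i j) := by
      rw [measure_biUnion_finset hdisjUnion (fun d _ => hsingle _ p r)]
      have hval : ∀ d ∈ G, P {ω | Z p r ω = fun ij => if ij = d then 1 else 0}
          = ENNReal.ofReal (β d.1 d.2) := by
        rintro ⟨i, j⟩ hd
        exact hmult1 p r i (hGmem _ hd).1 j (hGmem _ hd).2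
      rw [Finset.sum_congr rfl hval,
        ← ENNReal.ofReal_sum_of_nonneg (fun d hd => hβnn d (hGmem d hd).1 (hGmem d hd).2)]
      congr 1
      rw [hGdef, Finset.sum_product]
    have hBm : MeasurableSet (⋃ d ∈ G, {ω | Z p r ω = fun ij => if ij = d then 1 else 0}) :=
      G.measurableSet_biUnion (fun d _ => hsingle _ p r)
    have h0m : MeasurableSet {ω | Z p r ω = fun _ => 0} := hsingle _ p r
    have hdisj0 : Disjoint (⋃ d ∈ G, {ω | Z p r ω = fun ij => if ij = d then 1 else 0})
        {ω | Z p r ω = fun _ => 0} := by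
      rw [Set.disjoint_left]
      rintro ω hω h0
      simp only [Set.mem_iUnion, Set.mem_setOf_eq] at hω h0
      obtain ⟨d, _, hzd⟩ := hω
      have h3 := congrFun (hzd.symm.trans h0) d
      simp at h3
    have hS0 : 0 ≤ ∑ i ∈ range (q1+1), ∑ j ∈ range (q2+1), β i j :=
      Finset.sum_nonneg fun i hi => Finset.sum_nonneg fun j hj =>
        hβ i (Nat.lt_succ_iff.1 (Finset.mem_range.1 hi)) j
          (Nat.lt_succ_iff.1 (Finset.mem_range.1 hj)) |>.1
    have hPA : P ((⋃ d ∈ G, {ω | Z p r ω = fun ij => if ij = d then 1 else 0})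
        ∪ {ω | Z p r ω = fun _ => 0}) = 1 := by
      rw [measure_union hdisj0 h0m, hPU, hmult0 p r,
        ← ENNReal.ofReal_add hS0 (by linarith)]
      have hsum1 : (∑ i ∈ range (q1+1), ∑ j ∈ range (q2+1), β i j)
          + (1 - ∑ i ∈ range (q1+1), ∑ j ∈ range (q2+1), β i j) = 1 := by ring
      rw [hsum1, ENNReal.ofReal_one]
    have hae : ∀ᵐ ω ∂P, ω ∈ (⋃ d ∈ G, {ω | Z p r ω = fun ij => if ij = d then 1 else 0})
        ∪ {ω | Z p r ω = fun _ => 0} := by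
      rw [ae_iff]
      exact (prob_compl_eq_zero_iff (hBm.union h0m)).2 hPA
    filter_upwards [hae] with ω hω
    rcases hω with hω | hω
    · simp only [Set.mem_iUnion, Set.mem_setOf_eq] at hω
      obtain ⟨d, _, hzd⟩ := hω
      rw [hzd]
      by_cases hcd : c = d
      · have hcd' : ¬ c' = d := fun h => hcc' (hcd.trans h.symm)
        simp [hcd']
      · simp [hcd]
    · simp only [Set.mem_setOf_eq] at hω
      rw [hω]
      simp
  -- joint independence of the full system
  have hW : iIndepFun
      (Sum.elim (fun p => (fun (n : ℕ) (_ : ℕ × ℕ) => n) ∘ ε p)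
        (fun q : (ℤ × ℤ) × ℕ => Z q.1 q.2)) P := by
    refine iIndepFun_sum_elim' ?_ hZiid ?_
    · exact hεiid.comp _ (fun p => measurable_pi_lambda _ fun _ => measurable_id)
    · have hφ : Measurable (fun (x : (ℤ × ℤ) → ℕ) (p : ℤ × ℤ) (_ : ℕ × ℕ) => x p) :=
        measurable_pi_lambda _ fun p => measurable_pi_lambda _ fun _ => measurable_pi_apply p
      exact hindep.comp hφ measurable_id
  have hWm : ∀ i, Measurable ((Sum.elim (fun p => (fun (n : ℕ) (_ : ℕ × ℕ) => n) ∘ ε p)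
      (fun q : (ℤ × ℤ) × ℕ => Z q.1 q.2)) i) := by
    rintro (p | q)
    · exact (measurable_pi_lambda _ fun _ => measurable_id).comp (hεmeas p)
    · exact hZmeas q.1 q.2
  -- independence of ε p from any function of (Z p r)_r
  have hcomap_ε : ∀ p : ℤ × ℤ,
      MeasurableSpace.comap (ε p) inferInstance
        ≤ MeasurableSpace.comap ((Sum.elim (fun p => (fun (n : ℕ) (_ : ℕ × ℕ) => n) ∘ ε p)
            (fun q : (ℤ × ℤ) × ℕ => Z q.1 q.2)) (Sum.inl p)) inferInstance := by
    intro p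
    have heq : ε p = (fun v : ℕ × ℕ → ℕ => v (0, 0))
        ∘ ((Sum.elim (fun p => (fun (n : ℕ) (_ : ℕ × ℕ) => n) ∘ ε p)
            (fun q : (ℤ × ℤ) × ℕ => Z q.1 q.2)) (Sum.inl p)) := rfl
    rw [heq, ← MeasurableSpace.comap_comp]
    exact MeasurableSpace.comap_mono (measurable_pi_apply ((0, 0) : ℕ × ℕ)).comap_le
  have hle : ∀ (S : Set ((ℤ × ℤ) ⊕ ((ℤ × ℤ) × ℕ))) (i : (ℤ × ℤ) ⊕ ((ℤ × ℤ) × ℕ)), i ∈ S →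
      MeasurableSpace.comap ((Sum.elim (fun p => (fun (n : ℕ) (_ : ℕ × ℕ) => n) ∘ ε p)
          (fun q : (ℤ × ℤ) × ℕ => Z q.1 q.2)) i) inferInstance
        ≤ ⨆ j ∈ S, MeasurableSpace.comap
            ((Sum.elim (fun p => (fun (n : ℕ) (_ : ℕ × ℕ) => n) ∘ ε p)
              (fun q : (ℤ × ℤ) × ℕ => Z q.1 q.2)) j) inferInstance :=
    fun S i hi => le_biSup
      (f := fun j : (ℤ × ℤ) ⊕ ((ℤ × ℤ) × ℕ) => MeasurableSpace.comap
        ((Sum.elim (fun p => (fun (n : ℕ) (_ : ℕ × ℕ) => n) ∘ ε p)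
          (fun q : (ℤ × ℤ) × ℕ => Z q.1 q.2)) j) inferInstance) hi
  have hIeZ : ∀ (p : ℤ × ℤ) (χ : ℕ → ℝ) (g : (ℕ → (ℕ × ℕ → ℕ)) → ℝ), Measurable g →
      IndepFun (fun ω => χ (ε p ω)) (fun ω => g (fun r => Z p r ω)) P := by
    intro p χ g hg
    refine indepFun_of_measurable_iSup hW hWm
      (S := Set.range (Sum.inl : (ℤ × ℤ) → (ℤ × ℤ) ⊕ ((ℤ × ℤ) × ℕ)))
      (T := Set.range (Sum.inr : (ℤ × ℤ) × ℕ → (ℤ × ℤ) ⊕ ((ℤ × ℤ) × ℕ))) ?_ ?_ ?_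
    · rw [Set.disjoint_left]
      rintro x ⟨a, rfl⟩ ⟨b, hb⟩
      exact Sum.inr_ne_inl hb
    · exact measurable_comp' (measurable_of_comap_le' ((hcomap_ε p).trans
        (hle _ _ (⟨p, rfl⟩ : Sum.inl p ∈ Set.range Sum.inl)))) (measurable_of_countable χ)
    · exact measurable_comp' (measurable_pi_lambda' _ fun r =>
        measurable_of_comap_le'
          (hle _ (Sum.inr (p, r)) (⟨(p, r), rfl⟩ : Sum.inr (p, r) ∈ Set.range Sum.inr))) hg
  -- independence of the U's at distinct sites
  have hIcross : ∀ p p' : ℤ × ℤ, p ≠ p' → ∀ c c' : ℕ × ℕ,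
      IndepFun (fun ω => ∑ r ∈ range (ε p ω), (Z p r ω c : ℝ))
        (fun ω => ∑ r ∈ range (ε p' ω), (Z p' r ω c' : ℝ)) P := by
    intro p p' hpp' c c'
    refine indepFun_of_measurable_iSup hW hWm
      (S := {x : (ℤ × ℤ) ⊕ ((ℤ × ℤ) × ℕ) | x = Sum.inl p ∨ ∃ r, x = Sum.inr (p, r)})
      (T := {x : (ℤ × ℤ) ⊕ ((ℤ × ℤ) × ℕ) | x = Sum.inl p' ∨ ∃ r, x = Sum.inr (p', r)})
      ?_ ?_ ?_
    · rw [Set.disjoint_left]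
      rintro x hx hx'
      simp only [Set.mem_setOf_eq] at hx hx'
      rcases hx with rfl | ⟨r, rfl⟩
      · rcases hx' with h | ⟨r', h⟩
        · exact hpp' (Sum.inl.inj h)
        · exact Sum.inl_ne_inr h
      · rcases hx' with h | ⟨r', h⟩
        · exact Sum.inr_ne_inl h
        · exact hpp' (congrArg Prod.fst (Sum.inr.inj h))
    · refine measurable_randsum ?_ ?_
      · exact measurable_of_comap_le' ((hcomap_ε p).trans
          (hle _ _ (Or.inl rfl : Sum.inl p ∈
            {x : (ℤ × ℤ) ⊕ ((ℤ × ℤ) × ℕ) | x = Sum.inl p ∨ ∃ r, x = Sum.inr (p, r)})))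
      · intro r
        exact measurable_comp' (measurable_comp' (measurable_of_comap_le'
            (hle _ (Sum.inr (p, r)) (Or.inr ⟨r, rfl⟩ : Sum.inr (p, r) ∈
              {x : (ℤ × ℤ) ⊕ ((ℤ × ℤ) × ℕ) | x = Sum.inl p ∨ ∃ r, x = Sum.inr (p, r)})))
          (measurable_pi_apply c)) (measurable_of_countable (fun m : ℕ => (m : ℝ)))
    · refine measurable_randsum ?_ ?_
      · exact measurable_of_comap_le' ((hcomap_ε p').trans
          (hle _ _ (Or.inl rfl : Sum.inl p' ∈
            {x : (ℤ × ℤ) ⊕ ((ℤ × ℤ) × ℕ) | x = Sum.inl p' ∨ ∃ r, x = Sum.inr (p', r)})))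
      · intro r
        exact measurable_comp' (measurable_comp' (measurable_of_comap_le'
            (hle _ (Sum.inr (p', r)) (Or.inr ⟨r, rfl⟩ : Sum.inr (p', r) ∈
              {x : (ℤ × ℤ) ⊕ ((ℤ × ℤ) × ℕ) | x = Sum.inl p' ∨ ∃ r, x = Sum.inr (p', r)})))
          (measurable_pi_apply c')) (measurable_of_countable (fun m : ℕ => (m : ℝ)))
  -- independence of individual thinning variables
  have hZZ' : ∀ (p : ℤ × ℤ) r r', r ≠ r' → ∀ c c' : ℕ × ℕ,
      IndepFun (fun ω => (Z p r ω c : ℝ)) (fun ω => (Z p r' ω c' : ℝ)) P := by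
    intro p r r' hrr' c c'
    have h := hZiid.indepFun (i := (p, r)) (j := (p, r'))
      (by simp [Prod.ext_iff, hrr'])
    exact h.comp ((measurable_of_countable (fun m : ℕ => (m : ℝ))).comp (measurable_pi_apply c))
      ((measurable_of_countable (fun m : ℕ => (m : ℝ))).comp (measurable_pi_apply c'))
  -- splitting a fiber integral of a Z-side functional
  have hfibersplit : ∀ (p : ℤ × ℤ) (n : ℕ) (g : (ℕ → (ℕ × ℕ → ℕ)) → ℝ), Measurable g →
      (∀ z, 0 ≤ g z) →
      ∫ ω in (ε p) ⁻¹' {n}, g (fun r => Z p r ω) ∂P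
        = (P ((ε p) ⁻¹' {n})).toReal * ∫ ω, g (fun r => Z p r ω) ∂P := by
    intro p n g hg hgnn
    have hms : MeasurableSet ((ε p) ⁻¹' {n}) := hεmeas p (measurableSet_singleton n)
    rw [← integral_indicator hms]
    have hind : Set.indicator ((ε p) ⁻¹' {n}) (fun ω => g (fun r => Z p r ω))
        = fun ω => (if ε p ω = n then (1 : ℝ) else 0) * g (fun r => Z p r ω) := by
      funext ω
      by_cases h : ε p ω = n <;> simp [Set.indicator, h]
    rw [hind]
    have hI := hIeZ p (fun m => if m = n then (1 : ℝ) else 0) g hg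
    have hmul : ∫ ω, (if ε p ω = n then (1 : ℝ) else 0) * g (fun r => Z p r ω) ∂P
        = (∫ ω, (if ε p ω = n then (1 : ℝ) else 0) ∂P) * ∫ ω, g (fun r => Z p r ω) ∂P :=
      hI.integral_fun_mul_eq_mul_integral
        ((measurable_of_countable (fun m : ℕ => if m = n then (1 : ℝ) else 0)).comp
          (hεmeas p)).aestronglyMeasurable
        (hg.comp (measurable_pi_lambda _ fun r => hZmeas p r)).aestronglyMeasurable
    rw [hmul]
    have hchi : (fun ω => if ε p ω = n then (1 : ℝ) else 0)
        = Set.indicator ((ε p) ⁻¹' {n}) (fun _ => (1 : ℝ)) := by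
      funext ω
      by_cases h : ε p ω = n <;> simp [Set.indicator, h]
    rw [hchi, integral_indicator_const (1 : ℝ) hms, smul_eq_mul, mul_one, measureReal_def]
  -- integrability of the U's and their products at a common site
  have hUint : ∀ p (c : ℕ × ℕ),
      Integrable (fun ω => ∑ r ∈ range (ε p ω), (Z p r ω c : ℝ)) P := by
    intro p c
    refine Integrable.mono' (hεint1 p) (hUmeas p c).aestronglyMeasurable
      (ae_of_all _ fun ω => ?_)
    rw [Real.norm_eq_abs, abs_of_nonneg (hUnn p c ω)]
    exact hUle p c ω
  have hUsame_int : ∀ p (c c' : ℕ × ℕ),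
      Integrable (fun ω => (∑ r ∈ range (ε p ω), (Z p r ω c : ℝ))
        * (∑ r ∈ range (ε p ω), (Z p r ω c' : ℝ))) P := by
    intro p c c'
    refine Integrable.mono' (hεint2 p)
      ((hUmeas p c).mul (hUmeas p c')).aestronglyMeasurable (ae_of_all _ fun ω => ?_)
    rw [Real.norm_eq_abs, abs_of_nonneg (mul_nonneg (hUnn p c ω) (hUnn p c' ω))]
    calc (∑ r ∈ range (ε p ω), (Z p r ω c : ℝ)) * (∑ r ∈ range (ε p ω), (Z p r ω c' : ℝ))
        ≤ (ε p ω : ℝ) * (ε p ω : ℝ) :=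
          mul_le_mul (hUle p c ω) (hUle p c' ω) (hUnn p c' ω) (Nat.cast_nonneg _)
      _ = (ε p ω : ℝ) ^ 2 := (sq (ε p ω : ℝ)).symm
  -- mean of U
  have hUmean : ∀ p (c : ℕ × ℕ), c.1 ≤ q1 → c.2 ≤ q2 →
      ∫ ω, (∑ r ∈ range (ε p ω), (Z p r ω c : ℝ)) ∂P = β c.1 c.2 * με := by
    intro p c hc1 hc2
    have hfibU := hasSum_integral_fiber (hεmeas p) (hUint p c)
    have hfibN := hasSum_integral_fiber (hεmeas p) (hεint1 p)
    have hkey : ∀ n : ℕ, ∫ ω in (ε p) ⁻¹' {n}, (∑ r ∈ range (ε p ω), (Z p r ω c : ℝ)) ∂P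
        = (∫ ω in (ε p) ⁻¹' {n}, (ε p ω : ℝ) ∂P) * β c.1 c.2 := by
      intro n
      have hms : MeasurableSet ((ε p) ⁻¹' {n}) := hεmeas p (measurableSet_singleton n)
      have e1 : ∫ ω in (ε p) ⁻¹' {n}, (∑ r ∈ range (ε p ω), (Z p r ω c : ℝ)) ∂P
          = ∫ ω in (ε p) ⁻¹' {n}, (∑ r ∈ range n, (Z p r ω c : ℝ)) ∂P :=
        setIntegral_congr_fun hms (fun ω hω => by
          simp only [Set.mem_preimage, Set.mem_singleton_iff] at hω
          rw [hω])
      have e2 : ∫ ω in (ε p) ⁻¹' {n}, (ε p ω : ℝ) ∂P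
          = (P ((ε p) ⁻¹' {n})).toReal * (n : ℝ) := by
        rw [setIntegral_congr_fun (g := fun _ => (n : ℝ)) hms (fun ω hω => by
          simp only [Set.mem_preimage, Set.mem_singleton_iff] at hω
          rw [hω]), setIntegral_const, smul_eq_mul, measureReal_def]
      have e3 : ∫ ω in (ε p) ⁻¹' {n}, (∑ r ∈ range n, (Z p r ω c : ℝ)) ∂P
          = (P ((ε p) ⁻¹' {n})).toReal * ∫ ω, (∑ r ∈ range n, (Z p r ω c : ℝ)) ∂P :=
        hfibersplit p n (fun z => ∑ r ∈ range n, (z r c : ℝ))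
          (Finset.measurable_sum _ fun r _ =>
            (measurable_of_countable (fun m : ℕ => (m : ℝ))).comp
              ((measurable_pi_apply c).comp (measurable_pi_apply r)))
          (fun z => Finset.sum_nonneg fun r _ => Nat.cast_nonneg _)
      have e4 : ∫ ω, (∑ r ∈ range n, (Z p r ω c : ℝ)) ∂P = (n : ℝ) * β c.1 c.2 := by
        rw [integral_finset_sum _ (fun r _ => hZint p r c),
          Finset.sum_congr rfl (fun r _ => hZval p r c hc1 hc2), Finset.sum_const, card_range,
          nsmul_eq_mul]
      rw [e1, e3, e4, e2]
      ring
    rw [show (fun n => ∫ ω in (ε p) ⁻¹' {n}, (∑ r ∈ range (ε p ω), (Z p r ω c : ℝ)) ∂P)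
        = (fun n => (∫ ω in (ε p) ⁻¹' {n}, (ε p ω : ℝ) ∂P) * β c.1 c.2)
      from funext hkey] at hfibU
    have hval := hfibU.unique (hfibN.mul_right (β c.1 c.2))
    rw [hval, hεmean p]
    ring
  -- second moment of U at a common site
  have hUsame : ∀ p (c c' : ℕ × ℕ), c.1 ≤ q1 → c.2 ≤ q2 → c'.1 ≤ q1 → c'.2 ≤ q2 → c ≠ c' →
      ∫ ω, (∑ r ∈ range (ε p ω), (Z p r ω c : ℝ))
        * (∑ r ∈ range (ε p ω), (Z p r ω c' : ℝ)) ∂P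
      = (σε2 + με ^ 2 - με) * (β c.1 c.2 * β c'.1 c'.2) := by
    intro p c c' hc1 hc2 hc1' hc2' hcc'
    have hfsq_int : Integrable (fun ω => (ε p ω : ℝ) ^ 2 - (ε p ω : ℝ)) P :=
      (hεint2 p).sub (hεint1 p)
    have hfibU := hasSum_integral_fiber (hεmeas p) (hUsame_int p c c')
    have hfibS := hasSum_integral_fiber (hεmeas p) hfsq_int
    have hkey : ∀ n : ℕ,
        ∫ ω in (ε p) ⁻¹' {n}, (∑ r ∈ range (ε p ω), (Z p r ω c : ℝ))
          * (∑ r ∈ range (ε p ω), (Z p r ω c' : ℝ)) ∂P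
        = (∫ ω in (ε p) ⁻¹' {n}, ((ε p ω : ℝ) ^ 2 - (ε p ω : ℝ)) ∂P)
            * (β c.1 c.2 * β c'.1 c'.2) := by
      intro n
      have hms : MeasurableSet ((ε p) ⁻¹' {n}) := hεmeas p (measurableSet_singleton n)
      have e1 : ∫ ω in (ε p) ⁻¹' {n}, (∑ r ∈ range (ε p ω), (Z p r ω c : ℝ))
            * (∑ r ∈ range (ε p ω), (Z p r ω c' : ℝ)) ∂P
          = ∫ ω in (ε p) ⁻¹' {n}, (∑ r ∈ range n, (Z p r ω c : ℝ))
            * (∑ r ∈ range n, (Z p r ω c' : ℝ)) ∂P :=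
        setIntegral_congr_fun hms (fun ω hω => by
          simp only [Set.mem_preimage, Set.mem_singleton_iff] at hω
          rw [hω])
      have e2 : ∫ ω in (ε p) ⁻¹' {n}, ((ε p ω : ℝ) ^ 2 - (ε p ω : ℝ)) ∂P
          = (P ((ε p) ⁻¹' {n})).toReal * ((n : ℝ) ^ 2 - (n : ℝ)) := by
        rw [setIntegral_congr_fun (g := fun _ => ((n : ℝ) ^ 2 - (n : ℝ))) hms (fun ω hω => by
          simp only [Set.mem_preimage, Set.mem_singleton_iff] at hω
          rw [hω]), setIntegral_const, smul_eq_mul, measureReal_def]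
      have e3 : ∫ ω in (ε p) ⁻¹' {n}, (∑ r ∈ range n, (Z p r ω c : ℝ))
            * (∑ r ∈ range n, (Z p r ω c' : ℝ)) ∂P
          = (P ((ε p) ⁻¹' {n})).toReal * ∫ ω, (∑ r ∈ range n, (Z p r ω c : ℝ))
            * (∑ r ∈ range n, (Z p r ω c' : ℝ)) ∂P :=
        hfibersplit p n (fun z => (∑ r ∈ range n, (z r c : ℝ)) * (∑ r ∈ range n, (z r c' : ℝ)))
          ((Finset.measurable_sum _ fun r _ =>
            (measurable_of_countable (fun m : ℕ => (m : ℝ))).comp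
              ((measurable_pi_apply c).comp (measurable_pi_apply r))).mul
           (Finset.measurable_sum _ fun r _ =>
            (measurable_of_countable (fun m : ℕ => (m : ℝ))).comp
              ((measurable_pi_apply c').comp (measurable_pi_apply r))))
          (fun z => mul_nonneg (Finset.sum_nonneg fun r _ => Nat.cast_nonneg _)
            (Finset.sum_nonneg fun r _ => Nat.cast_nonneg _))
      have e4 : ∫ ω, (∑ r ∈ range n, (Z p r ω c : ℝ))
            * (∑ r ∈ range n, (Z p r ω c' : ℝ)) ∂P
          = ((n : ℝ) ^ 2 - (n : ℝ)) * (β c.1 c.2 * β c'.1 c'.2) := by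
        have hpt : (fun ω => (∑ r ∈ range n, (Z p r ω c : ℝ))
              * (∑ r ∈ range n, (Z p r ω c' : ℝ)))
            = fun ω => ∑ r ∈ range n, ∑ r' ∈ range n,
                (Z p r ω c : ℝ) * (Z p r' ω c' : ℝ) := by
          funext ω
          rw [Finset.sum_mul_sum]
        rw [hpt, integral_finset_sum _
          (fun r _ => integrable_finset_sum _ fun r' _ => hZZint p r r' c c')]
        have hin : ∀ r ∈ range n,
            ∫ ω, (∑ r' ∈ range n, (Z p r ω c : ℝ) * (Z p r' ω c' : ℝ)) ∂P
            = ∑ r' ∈ range n, (if r = r' then (0 : ℝ) else β c.1 c.2 * β c'.1 c'.2) := by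
          intro r _
          rw [integral_finset_sum _ (fun r' _ => hZZint p r r' c c')]
          refine Finset.sum_congr rfl fun r' _ => ?_
          by_cases hrr : r = r'
          · rw [if_pos hrr]
            subst hrr
            exact integral_eq_zero_of_ae (by
              filter_upwards [hdiag p r c c' hc1 hc2 hc1' hc2' hcc'] with ω h using h)
          · rw [if_neg hrr]
            have hmul : ∫ ω, (Z p r ω c : ℝ) * (Z p r' ω c' : ℝ) ∂P
                = (∫ ω, (Z p r ω c : ℝ) ∂P) * ∫ ω, (Z p r' ω c' : ℝ) ∂P :=
              (hZZ' p r r' hrr c c').integral_fun_mul_eq_mul_integral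
                (hZm1 p r c).aestronglyMeasurable (hZm1 p r' c').aestronglyMeasurable
            rw [hmul, hZval p r c hc1 hc2, hZval p r' c' hc1' hc2']
        rw [Finset.sum_congr rfl hin, sum_offdiag_const n (β c.1 c.2 * β c'.1 c'.2)]
      rw [e1, e3, e4, e2]
      ring
    rw [show (fun n => ∫ ω in (ε p) ⁻¹' {n}, (∑ r ∈ range (ε p ω), (Z p r ω c : ℝ))
          * (∑ r ∈ range (ε p ω), (Z p r ω c' : ℝ)) ∂P)
        = (fun n => (∫ ω in (ε p) ⁻¹' {n}, ((ε p ω : ℝ) ^ 2 - (ε p ω : ℝ)) ∂P)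
            * (β c.1 c.2 * β c'.1 c'.2))
      from funext hkey] at hfibU
    have hval := hfibU.unique (hfibS.mul_right (β c.1 c.2 * β c'.1 c'.2))
    have hS : ∫ ω, ((ε p ω : ℝ) ^ 2 - (ε p ω : ℝ)) ∂P = σε2 + με ^ 2 - με := by
      rw [integral_sub (hεint2 p) (hεint1 p), hεsq p, hεmean p]
    rw [hval, hS]
  -- product over distinct sites factorizes
  have hUcross : ∀ p p' : ℤ × ℤ, p ≠ p' → ∀ c c' : ℕ × ℕ,
      ∫ ω, (∑ r ∈ range (ε p ω), (Z p r ω c : ℝ))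
        * (∑ r ∈ range (ε p' ω), (Z p' r ω c' : ℝ)) ∂P
      = (∫ ω, (∑ r ∈ range (ε p ω), (Z p r ω c : ℝ)) ∂P)
        * ∫ ω, (∑ r ∈ range (ε p' ω), (Z p' r ω c' : ℝ)) ∂P := by
    intro p p' hpp' c c'
    exact (hIcross p p' hpp' c c').integral_fun_mul_eq_mul_integral
      (hUmeas p c).aestronglyMeasurable (hUmeas p' c').aestronglyMeasurable
  -- casting the field
  have hXcast1 : ∀ ω, (X s t ω : ℝ)
      = ∑ c ∈ G, ∑ r ∈ range (ε (s - (c.1 : ℤ), t - (c.2 : ℤ)) ω),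
          (Z (s - (c.1 : ℤ), t - (c.2 : ℤ)) r ω c : ℝ) := by
    intro ω
    rw [hGdef, Finset.sum_product, hX s t ω]
    push_cast
    rfl
  have hXcast2 : ∀ ω, (X (s - (k : ℤ)) (t - (l : ℤ)) ω : ℝ)
      = ∑ c ∈ G, ∑ r ∈ range (ε (s - (k : ℤ) - (c.1 : ℤ), t - (l : ℤ) - (c.2 : ℤ)) ω),
          (Z (s - (k : ℤ) - (c.1 : ℤ), t - (l : ℤ) - (c.2 : ℤ)) r ω c : ℝ) := by
    intro ω
    rw [hGdef, Finset.sum_product, hX (s - (k : ℤ)) (t - (l : ℤ)) ω]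
    push_cast
    rfl
  -- the two mean integrals
  have hEX1 : ∫ ω, (X s t ω : ℝ) ∂P = ∑ c ∈ G, β c.1 c.2 * με := by
    simp_rw [hXcast1]
    rw [integral_finset_sum _ (fun c _ => hUint _ c)]
    exact Finset.sum_congr rfl fun c hc => hUmean _ c (hGmem c hc).1 (hGmem c hc).2
  have hEX2 : ∫ ω, (X (s - (k : ℤ)) (t - (l : ℤ)) ω : ℝ) ∂P = ∑ c ∈ G, β c.1 c.2 * με := by
    simp_rw [hXcast2]
    rw [integral_finset_sum _ (fun c _ => hUint _ c)]
    exact Finset.sum_congr rfl fun c hc => hUmean _ c (hGmem c hc).1 (hGmem c hc).2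
  -- pairwise integrability
  have hpe_iff : ∀ c c' : ℕ × ℕ,
      ((s - (c.1 : ℤ), t - (c.2 : ℤ)) : ℤ × ℤ)
        = (s - (k : ℤ) - (c'.1 : ℤ), t - (l : ℤ) - (c'.2 : ℤ))
      ↔ (c.1 = k + c'.1 ∧ c.2 = l + c'.2) := by
    intro c c'
    rw [Prod.ext_iff]
    constructor
    · rintro ⟨h1, h2⟩
      constructor
      · have : (c.1 : ℤ) = (k : ℤ) + (c'.1 : ℤ) := by omega
        exact_mod_cast this
      · have : (c.2 : ℤ) = (l : ℤ) + (c'.2 : ℤ) := by omega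
        exact_mod_cast this
    · rintro ⟨h1, h2⟩
      constructor
      · have : (c.1 : ℤ) = (k : ℤ) + (c'.1 : ℤ) := by exact_mod_cast h1
        omega
      · have : (c.2 : ℤ) = (l : ℤ) + (c'.2 : ℤ) := by exact_mod_cast h2
        omega
  have hint_pair : ∀ c c' : ℕ × ℕ,
      Integrable (fun ω =>
        (∑ r ∈ range (ε (s - (c.1 : ℤ), t - (c.2 : ℤ)) ω),
          (Z (s - (c.1 : ℤ), t - (c.2 : ℤ)) r ω c : ℝ))
        * (∑ r ∈ range (ε (s - (k : ℤ) - (c'.1 : ℤ), t - (l : ℤ) - (c'.2 : ℤ)) ω),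
          (Z (s - (k : ℤ) - (c'.1 : ℤ), t - (l : ℤ) - (c'.2 : ℤ)) r ω c' : ℝ))) P := by
    intro c c'
    by_cases hpe : ((s - (c.1 : ℤ), t - (c.2 : ℤ)) : ℤ × ℤ)
        = (s - (k : ℤ) - (c'.1 : ℤ), t - (l : ℤ) - (c'.2 : ℤ))
    · rw [hpe]
      exact hUsame_int _ c c'
    · exact (hIcross _ _ hpe c c').integrable_mul (hUint _ c) (hUint _ c')
  -- the product integral
  have hEprod : ∫ ω, (X s t ω : ℝ) * (X (s - (k : ℤ)) (t - (l : ℤ)) ω : ℝ) ∂P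
      = ∑ c ∈ G, ∑ c' ∈ G,
          ∫ ω, (∑ r ∈ range (ε (s - (c.1 : ℤ), t - (c.2 : ℤ)) ω),
              (Z (s - (c.1 : ℤ), t - (c.2 : ℤ)) r ω c : ℝ))
            * (∑ r ∈ range (ε (s - (k : ℤ) - (c'.1 : ℤ), t - (l : ℤ) - (c'.2 : ℤ)) ω),
              (Z (s - (k : ℤ) - (c'.1 : ℤ), t - (l : ℤ) - (c'.2 : ℤ)) r ω c' : ℝ)) ∂P := by
    have hpt : (fun ω => (X s t ω : ℝ) * (X (s - (k : ℤ)) (t - (l : ℤ)) ω : ℝ))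
        = fun ω => ∑ c ∈ G, ∑ c' ∈ G,
            (∑ r ∈ range (ε (s - (c.1 : ℤ), t - (c.2 : ℤ)) ω),
              (Z (s - (c.1 : ℤ), t - (c.2 : ℤ)) r ω c : ℝ))
            * (∑ r ∈ range (ε (s - (k : ℤ) - (c'.1 : ℤ), t - (l : ℤ) - (c'.2 : ℤ)) ω),
              (Z (s - (k : ℤ) - (c'.1 : ℤ), t - (l : ℤ) - (c'.2 : ℤ)) r ω c' : ℝ)) := by
      funext ω
      rw [hXcast1 ω, hXcast2 ω, Finset.sum_mul_sum]
    rw [hpt, integral_finset_sum _ (fun c _ => integrable_finset_sum _ (fun c' _ => hint_pair c c'))]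
    exact Finset.sum_congr rfl fun c _ =>
      integral_finset_sum _ (fun c' _ => hint_pair c c')
  -- the value of each term
  have hfinal : ∀ c ∈ G, ∀ c' ∈ G,
      (∫ ω, (∑ r ∈ range (ε (s - (c.1 : ℤ), t - (c.2 : ℤ)) ω),
          (Z (s - (c.1 : ℤ), t - (c.2 : ℤ)) r ω c : ℝ))
        * (∑ r ∈ range (ε (s - (k : ℤ) - (c'.1 : ℤ), t - (l : ℤ) - (c'.2 : ℤ)) ω),
          (Z (s - (k : ℤ) - (c'.1 : ℤ), t - (l : ℤ) - (c'.2 : ℤ)) r ω c' : ℝ)) ∂P)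
        - (β c.1 c.2 * με) * (β c'.1 c'.2 * με)
      = if c.1 = k + c'.1 ∧ c.2 = l + c'.2
          then (σε2 - με) * (β c.1 c.2 * β c'.1 c'.2) else 0 := by
    intro c hc c' hc'
    by_cases hm : c.1 = k + c'.1 ∧ c.2 = l + c'.2
    · have hpe : ((s - (c.1 : ℤ), t - (c.2 : ℤ)) : ℤ × ℤ)
          = (s - (k : ℤ) - (c'.1 : ℤ), t - (l : ℤ) - (c'.2 : ℤ)) := (hpe_iff c c').2 hm
      have hne : c ≠ c' := by
        rintro rfl
        refine hkl ?_
        have h1 : k = 0 := by omega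
        have h2 : l = 0 := by omega
        rw [h1, h2]
      rw [if_pos hm, hpe, hUsame _ c c' (hGmem c hc).1 (hGmem c hc).2
        (hGmem c' hc').1 (hGmem c' hc').2 hne]
      ring
    · have hpe : ((s - (c.1 : ℤ), t - (c.2 : ℤ)) : ℤ × ℤ)
          ≠ (s - (k : ℤ) - (c'.1 : ℤ), t - (l : ℤ) - (c'.2 : ℤ)) := by
        intro h
        exact hm ((hpe_iff c c').1 h)
      rw [if_neg hm, hUcross _ _ hpe c c',
        hUmean _ c (hGmem c hc).1 (hGmem c hc).2,
        hUmean _ c' (hGmem c' hc').1 (hGmem c' hc').2, sub_self]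
  -- putting everything together
  calc (∫ ω, (X s t ω : ℝ) * (X (s - (k : ℤ)) (t - (l : ℤ)) ω : ℝ) ∂P)
      - (∫ ω, (X s t ω : ℝ) ∂P) * (∫ ω, (X (s - (k : ℤ)) (t - (l : ℤ)) ω : ℝ) ∂P)
      = ∑ c ∈ G, ∑ c' ∈ G,
          ((∫ ω, (∑ r ∈ range (ε (s - (c.1 : ℤ), t - (c.2 : ℤ)) ω),
              (Z (s - (c.1 : ℤ), t - (c.2 : ℤ)) r ω c : ℝ))
            * (∑ r ∈ range (ε (s - (k : ℤ) - (c'.1 : ℤ), t - (l : ℤ) - (c'.2 : ℤ)) ω),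
              (Z (s - (k : ℤ) - (c'.1 : ℤ), t - (l : ℤ) - (c'.2 : ℤ)) r ω c' : ℝ)) ∂P)
            - (β c.1 c.2 * με) * (β c'.1 c'.2 * με)) := by
        rw [hEprod, hEX1, hEX2, Finset.sum_mul_sum, ← Finset.sum_sub_distrib]
        exact Finset.sum_congr rfl fun c _ => (Finset.sum_sub_distrib _ _).symm
    _ = ∑ c ∈ G, ∑ c' ∈ G,
          (if c.1 = k + c'.1 ∧ c.2 = l + c'.2
            then (σε2 - με) * (β c.1 c.2 * β c'.1 c'.2) else 0) := by
        refine Finset.sum_congr rfl fun c hc => Finset.sum_congr rfl fun c' hc' => ?_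
        exact hfinal c hc c' hc'
    _ = (σε2 - με) * ∑ i ∈ Icc k q1, ∑ j ∈ Icc l q2, β i j * β (i - k) (j - l) := by
        rw [hGdef]
        exact sum_matched_pairs q1 q2 k l hk hl (σε2 - με) β
end
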